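/- arXiv:2010.10130 — 8 statements merged into one kernel-verified Lean document; each statement's English description precedes it below -/
import Mathlib

section
/- For an invertible positive bounded operator x on a Hilbert space, Δ(x) = Δ(x⁻¹). -/
set_option maxHeartbeats 1000000


variable {H : Type*} [NormedAddCommGroup H] [InnerProductSpace ℂ H] [CompleteSpace H]

/-- Michelson contrast / centrality measure for operators. -/
noncomputable def Delta (x : H →L[ℂ] H) : ℝ :=
  ⨅ A : {A : ℝ // 0 < A}, ‖(1 : H →L[ℂ] H) - (A.1)⁻¹ • x‖

section aux

local notation "𝒜" => (H →L[ℂ] H)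

lemma delta_aux_conj (r : ℝ) (a : 𝒜) :
    algebraMap ℝ 𝒜 r * a * algebraMap ℝ 𝒜 r = (r * r) • a := by
  rw [mul_assoc, ← Algebra.commutes r a, ← mul_assoc, ← map_mul, Algebra.smul_def]

lemma delta_smul_le_smul {a b : 𝒜} {r : ℝ} (hr : 0 ≤ r) (hab : a ≤ b) :
    r • a ≤ r • b := by
  have hsa : IsSelfAdjoint (algebraMap ℝ 𝒜 (Real.sqrt r)) :=
    IsSelfAdjoint.algebraMap 𝒜 (IsSelfAdjoint.all _)
  have := hsa.conjugate_le_conjugate hab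
  rwa [delta_aux_conj, delta_aux_conj, Real.mul_self_sqrt hr] at this

lemma delta_algebraMap_mono {r s : ℝ} (hrs : r ≤ s) :
    algebraMap ℝ 𝒜 r ≤ algebraMap ℝ 𝒜 s := by
  rw [← sub_nonneg, ← map_sub, Algebra.algebraMap_eq_smul_one]
  have h01 : (0 : 𝒜) ≤ 1 := by simpa using star_mul_self_nonneg (1 : 𝒜)
  simpa using delta_smul_le_smul (sub_nonneg.mpr hrs) h01

lemma delta_sandwich_of_norm {a : 𝒜} {t : ℝ} (ha : IsSelfAdjoint a) (h : ‖a‖ ≤ t) :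
    algebraMap ℝ 𝒜 (-t) ≤ a ∧ a ≤ algebraMap ℝ 𝒜 t := by
  constructor
  · refine le_trans ?_ ha.neg_algebraMap_norm_le_self
    rw [← map_neg]
    exact delta_algebraMap_mono (by linarith)
  · exact ha.le_algebraMap_norm_self.trans (delta_algebraMap_mono h)

lemma delta_norm_le_of_sandwich {a : 𝒜} {t : ℝ} (ht : 0 ≤ t) (ha : IsSelfAdjoint a)
    (h1 : algebraMap ℝ 𝒜 (-t) ≤ a) (h2 : a ≤ algebraMap ℝ 𝒜 t) : ‖a‖ ≤ t := by
  rcases subsingleton_or_nontrivial 𝒜 with hs | hn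
  · simpa [Subsingleton.elim a 0] using ht
  · rcases CStarAlgebra.norm_or_neg_norm_mem_spectrum ha with hm | hm
    · exact (le_algebraMap_iff_spectrum_le (R := ℝ) ha).mp h2 _ hm
    · have := (algebraMap_le_iff_le_spectrum (R := ℝ) ha).mp h1 _ hm
      linarith

lemma delta_bddBelow (x : 𝒜) :
    BddBelow (Set.range fun A : {A : ℝ // 0 < A} ↦ ‖(1 : 𝒜) - (A.1)⁻¹ • x‖) := by
  refine ⟨0, ?_⟩
  rintro r ⟨i, rfl⟩
  exact norm_nonneg _

lemma delta_le_one (x : 𝒜) : Delta x ≤ 1 := by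
  refine le_of_forall_pos_le_add fun ε hε ↦ ?_
  set A₀ : ℝ := max 1 (‖x‖ / ε) with hA₀
  have hA₀pos : 0 < A₀ := lt_of_lt_of_le one_pos (le_max_left _ _)
  have h1 : Delta x ≤ ‖(1 : 𝒜) - A₀⁻¹ • x‖ := ciInf_le (delta_bddBelow x) ⟨A₀, hA₀pos⟩
  have h2 : ‖(1 : 𝒜) - A₀⁻¹ • x‖ ≤ ‖(1 : 𝒜)‖ + A₀⁻¹ * ‖x‖ := by
    refine (norm_sub_le _ _).trans ?_
    rw [norm_smul, Real.norm_eq_abs, abs_of_pos (by positivity)]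
  have h3 : ‖(1 : 𝒜)‖ ≤ 1 := by
    rw [ContinuousLinearMap.one_def]
    exact ContinuousLinearMap.norm_id_le
  have h4 : A₀⁻¹ * ‖x‖ ≤ ε := by
    rw [inv_mul_le_iff₀ hA₀pos, mul_comm]
    calc ‖x‖ = ε * (‖x‖ / ε) := by field_simp
    _ ≤ ε * A₀ := mul_le_mul_of_nonneg_left (le_max_right _ _) hε.le
  linarith

lemma delta_key (x : 𝒜) (hx : x.IsPositive) (h : IsUnit x) :
    Delta (Ring.inverse x) ≤ Delta x := by
  refine le_ciInf fun A ↦ ?_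
  obtain ⟨A, hA⟩ := A
  set t : ℝ := ‖(1 : 𝒜) - A⁻¹ • x‖ with htdef
  by_cases hlt : t < 1
  swap
  · exact (delta_le_one _).trans (not_lt.mp hlt)
  have ht0 : 0 ≤ t := norm_nonneg _
  have hx0 : (0 : 𝒜) ≤ x := (ContinuousLinearMap.nonneg_iff_isPositive x).mpr hx
  have hxsa : IsSelfAdjoint x := IsSelfAdjoint.of_nonneg hx0
  -- the unit `v` whose value is `A⁻¹ • x` and inverse is `A • Ring.inverse x`
  have hmul1 : (A⁻¹ • x) * (A • Ring.inverse x) = 1 := by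
    rw [smul_mul_smul_comm, inv_mul_cancel₀ hA.ne', Ring.mul_inverse_cancel x h, one_smul]
  have hmul2 : (A • Ring.inverse x) * (A⁻¹ • x) = 1 := by
    rw [smul_mul_smul_comm, mul_inv_cancel₀ hA.ne', Ring.inverse_mul_cancel x h, one_smul]
  set v : 𝒜ˣ := ⟨A⁻¹ • x, A • Ring.inverse x, hmul1, hmul2⟩ with hvdef
  -- sandwich `A⁻¹ • x`
  have hsa : IsSelfAdjoint ((1 : 𝒜) - A⁻¹ • x) := by
    exact (IsSelfAdjoint.one (R := H →L[ℂ] H)).sub ((IsSelfAdjoint.all (A⁻¹ : ℝ)).smul hxsa)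
  obtain ⟨hb1, hb2⟩ := delta_sandwich_of_norm hsa (le_refl t)
  have h1 : algebraMap ℝ 𝒜 (1 - t) ≤ (v : 𝒜) := by
    have := sub_le_comm.mp hb2
    rwa [map_sub, map_one]
  have h2 : (v : 𝒜) ≤ algebraMap ℝ 𝒜 (1 + t) := by
    have h' := le_sub_comm.mp hb1
    calc (v : 𝒜) = A⁻¹ • x := rfl
    _ ≤ 1 - algebraMap ℝ 𝒜 (-t) := h'
    _ = algebraMap ℝ 𝒜 (1 + t) := by rw [map_neg, sub_neg_eq_add, map_add, map_one]
  have h1t : (0 : ℝ) < 1 - t := by linarith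
  have h1t' : (0 : ℝ) < 1 + t := by linarith
  have hc1pos : (0 : 𝒜) ≤ algebraMap ℝ 𝒜 (1 - t) := by
    have := delta_algebraMap_mono (H := H) (r := 0) (s := 1 - t) h1t.le
    rwa [map_zero] at this
  have hvpos : (0 : 𝒜) ≤ (v : 𝒜) := hc1pos.trans h1
  -- units for the scalars
  set c₁ : 𝒜ˣ := (Units.map (algebraMap ℝ 𝒜).toMonoidHom) (Units.mk0 (1 - t) h1t.ne') with hc₁
  set c₂ : 𝒜ˣ := (Units.map (algebraMap ℝ 𝒜).toMonoidHom) (Units.mk0 (1 + t) h1t'.ne') with hc₂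
  have hc₁coe : (c₁ : 𝒜) = algebraMap ℝ 𝒜 (1 - t) := rfl
  have hc₁inv : ((c₁⁻¹ : 𝒜ˣ) : 𝒜) = algebraMap ℝ 𝒜 (1 - t)⁻¹ := by
    rw [hc₁, Units.coe_map_inv]; simp
  have hc₂inv : ((c₂⁻¹ : 𝒜ˣ) : 𝒜) = algebraMap ℝ 𝒜 (1 + t)⁻¹ := by
    rw [hc₂, Units.coe_map_inv]; simp
  have hc₂pos : (0 : 𝒜) ≤ (c₂ : 𝒜) := by
    have := delta_algebraMap_mono (H := H) (r := 0) (s := 1 + t) h1t'.le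
    rw [map_zero] at this
    exact this
  -- invert the sandwich
  have i1 : ((v⁻¹ : 𝒜ˣ) : 𝒜) ≤ algebraMap ℝ 𝒜 (1 - t)⁻¹ := by
    have := CStarAlgebra.inv_le_inv (a := c₁) (b := v) (by rw [hc₁coe]; exact hc1pos)
      (by rw [hc₁coe]; exact h1)
    rwa [hc₁inv] at this
  have i2 : algebraMap ℝ 𝒜 (1 + t)⁻¹ ≤ ((v⁻¹ : 𝒜ˣ) : 𝒜) := by
    have := CStarAlgebra.inv_le_inv (a := v) (b := c₂) hvpos (by rw [hc₂]; exact h2)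
    rwa [hc₂inv] at this
  have hvinv : ((v⁻¹ : 𝒜ˣ) : 𝒜) = A • Ring.inverse x := rfl
  -- scale by `r = 1 - t^2`
  set r : ℝ := 1 - t * t with hrdef
  have hr0 : 0 ≤ r := by nlinarith
  have hsmulalg : ∀ q : ℝ, r • algebraMap ℝ 𝒜 q = algebraMap ℝ 𝒜 (r * q) := fun q => by
    rw [Algebra.smul_def, ← map_mul]
  have s1 : r • ((v⁻¹ : 𝒜ˣ) : 𝒜) ≤ algebraMap ℝ 𝒜 (1 + t) := by
    have := delta_smul_le_smul hr0 i1
    rwa [hsmulalg, show r * (1 - t)⁻¹ = 1 + t by rw [hrdef]; field_simp; ring] at this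
  have s2 : algebraMap ℝ 𝒜 (1 - t) ≤ r • ((v⁻¹ : 𝒜ˣ) : 𝒜) := by
    have := delta_smul_le_smul hr0 i2
    rwa [hsmulalg, show r * (1 + t)⁻¹ = 1 - t by rw [hrdef]; field_simp; ring] at this
  -- choose the new scaling constant
  have hrpos : 0 < r := by nlinarith
  have hArpos : 0 < A * r := mul_pos hA hrpos
  set B : ℝ := (A * r)⁻¹ with hBdef
  have hBpos : 0 < B := by positivity
  have hBsmul : B⁻¹ • Ring.inverse x = r • ((v⁻¹ : 𝒜ˣ) : 𝒜) := by
    rw [hvinv, smul_smul, hBdef, inv_inv, mul_comm]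
  -- final norm estimate
  have hinvsa : IsSelfAdjoint (Ring.inverse x) := by
    have : (0 : 𝒜) ≤ ((v⁻¹ : 𝒜ˣ) : 𝒜) := CFC.inv_nonneg_of_nonneg v hvpos
    rw [hvinv] at this
    have h' : (0 : 𝒜) ≤ Ring.inverse x := by
      have := delta_smul_le_smul (r := A⁻¹) (by positivity) this
      simpa [smul_smul, inv_mul_cancel₀ hA.ne'] using this
    exact IsSelfAdjoint.of_nonneg h'
  have hgoalsa : IsSelfAdjoint ((1 : 𝒜) - B⁻¹ • Ring.inverse x) :=
    (IsSelfAdjoint.one (R := H →L[ℂ] H)).sub ((IsSelfAdjoint.all (B⁻¹ : ℝ)).smul hinvsa)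
  have hnorm : ‖(1 : 𝒜) - B⁻¹ • Ring.inverse x‖ ≤ t := by
    refine delta_norm_le_of_sandwich ht0 hgoalsa ?_ ?_
    · rw [hBsmul]
      calc algebraMap ℝ 𝒜 (-t) = 1 - algebraMap ℝ 𝒜 (1 + t) := by
            rw [map_neg, map_add, map_one]; abel
      _ ≤ 1 - r • ((v⁻¹ : 𝒜ˣ) : 𝒜) := sub_le_sub_left s1 _
    · rw [hBsmul]
      calc (1 : 𝒜) - r • ((v⁻¹ : 𝒜ˣ) : 𝒜) ≤ 1 - algebraMap ℝ 𝒜 (1 - t) := sub_le_sub_left s2 _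
      _ = algebraMap ℝ 𝒜 t := by rw [map_sub, map_one]; abel
  exact (ciInf_le (delta_bddBelow _) ⟨B, hBpos⟩).trans hnorm

end aux

theorem delta_inv (x : H →L[ℂ] H) (hx : x.IsPositive) (h : IsUnit x) :
    Delta x = Delta (Ring.inverse x) := by
  have hx0 : (0 : H →L[ℂ] H) ≤ x := (ContinuousLinearMap.nonneg_iff_isPositive x).mpr hx
  have hinv_eq : Ring.inverse x = ((h.unit⁻¹ : (H →L[ℂ] H)ˣ) : H →L[ℂ] H) := by
    conv_lhs => rw [← h.unit_spec]
    exact Ring.inverse_unit h.unit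
  have hinv0 : (0 : H →L[ℂ] H) ≤ Ring.inverse x := by
    rw [hinv_eq]
    exact CFC.inv_nonneg_of_nonneg h.unit (by rwa [h.unit_spec])
  have hinv_pos : (Ring.inverse x).IsPositive :=
    (ContinuousLinearMap.nonneg_iff_isPositive _).mp hinv0
  have hinv_unit : IsUnit (Ring.inverse x) := by
    rw [hinv_eq]; exact (h.unit⁻¹).isUnit
  have h2 := delta_key (Ring.inverse x) hinv_pos hinv_unit
  have hinvinv : Ring.inverse (Ring.inverse x) = x := by
    rw [hinv_eq, Ring.inverse_unit, inv_inv, h.unit_spec]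
  rw [hinvinv] at h2
  exact le_antisymm h2 (delta_key x hx h)
end

section
/- For an invertible positive bounded operator x on a Hilbert space, Δ(x) = 0 if and only if x = ‖x‖·1. -/
variable {H : Type*} [NormedAddCommGroup H] [InnerProductSpace ℂ H] [CompleteSpace H]

set_option maxHeartbeats 1000000 in
set_option synthInstance.maxHeartbeats 400000 in
theorem delta_eq_zero_iff (x : H →L[ℂ] H) (hx : x.IsPositive) (h : IsUnit x) :
    Delta x = 0 ↔ x = ‖x‖ • (1 : H →L[ℂ] H) := by
  by_cases hH : Subsingleton H
  · constructor
    · intro _; exact Subsingleton.elim _ _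
    · intro _
      have hall : ∀ A : {A : ℝ // 0 < A}, ‖(1 : H →L[ℂ] H) - (A.1)⁻¹ • x‖ = 0 := by
        intro A
        rw [Subsingleton.elim ((1 : H →L[ℂ] H) - (A.1)⁻¹ • x) 0, norm_zero]
      unfold Delta
      rw [iInf_congr hall]
      exact ciInf_const
  · have hnt : Nontrivial H := not_subsingleton_iff_nontrivial.mp hH
    have hx0 : x ≠ 0 := by
      intro h0
      rw [h0] at h
      exact one_ne_zero (isUnit_zero_iff.mp h).symm
    have hnx : (0:ℝ) < ‖x‖ := norm_pos_iff.mpr hx0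
    have bdd : BddBelow (Set.range fun A : {A : ℝ // 0 < A} =>
        ‖(1 : H →L[ℂ] H) - (A.1)⁻¹ • x‖) := by
      refine ⟨0, ?_⟩
      rintro _ ⟨A, rfl⟩
      exact norm_nonneg _
    constructor
    · intro hz
      unfold Delta at hz
      have key : ∀ ε > (0:ℝ), ‖x - ‖x‖ • (1 : H →L[ℂ] H)‖ ≤ ε := by
        intro ε hε
        set δ := min (1/2 : ℝ) (ε / (4 * ‖x‖)) with hδdef
        have hδpos : 0 < δ := lt_min (by norm_num) (div_pos hε (by positivity))
        have hd2 : δ ≤ 1/2 := min_le_left _ _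
        have hde : δ ≤ ε / (4 * ‖x‖) := min_le_right _ _
        have hlt : (⨅ A : {A : ℝ // 0 < A}, ‖(1 : H →L[ℂ] H) - (A.1)⁻¹ • x‖) < δ := by
          rw [hz]; exact hδpos
        obtain ⟨A, hA⟩ := exists_lt_of_ciInf_lt hlt
        have hApos : (0:ℝ) < A.1 := A.2
        have hAinv : (0:ℝ) < (A.1)⁻¹ := inv_pos.mpr hApos
        have hnorm1 : ‖(1 : H →L[ℂ] H)‖ = 1 := norm_one
        have h1 : |1 - (A.1)⁻¹ * ‖x‖| < δ := by
          have := abs_norm_sub_norm_le ((1 : H →L[ℂ] H)) ((A.1)⁻¹ • x)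
          rw [hnorm1, norm_smul, Real.norm_eq_abs, abs_of_pos hAinv] at this
          exact lt_of_le_of_lt this hA
        have h1' := abs_lt.mp h1
        have hhalf : (1:ℝ)/2 < (A.1)⁻¹ * ‖x‖ := by linarith
        have hA2 : A.1 ≤ 2 * ‖x‖ := by
          nlinarith [mul_inv_cancel₀ (ne_of_gt hApos),
            mul_pos hApos (show (0:ℝ) < (A.1)⁻¹ * ‖x‖ - 1/2 by linarith)]
        have e1 : x - (A.1) • (1 : H →L[ℂ] H) = A.1 • ((A.1)⁻¹ • x - 1) := by
          rw [smul_sub, smul_smul, mul_inv_cancel₀ (ne_of_gt hApos), one_smul]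
        have b1 : ‖x - (A.1) • (1 : H →L[ℂ] H)‖ ≤ A.1 * δ := by
          rw [e1, norm_smul, Real.norm_eq_abs, abs_of_pos hApos, ← norm_sub_rev]
          exact mul_le_mul_of_nonneg_left hA.le hApos.le
        have b2 : ‖(A.1) • (1 : H →L[ℂ] H) - ‖x‖ • (1 : H →L[ℂ] H)‖ ≤ A.1 * δ := by
          rw [← sub_smul, norm_smul, Real.norm_eq_abs, hnorm1, mul_one]
          have : A.1 - ‖x‖ = A.1 * (1 - (A.1)⁻¹ * ‖x‖) := by
            field_simp
          rw [this, abs_mul, abs_of_pos hApos]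
          exact mul_le_mul_of_nonneg_left h1.le hApos.le
        calc ‖x - ‖x‖ • (1 : H →L[ℂ] H)‖
            ≤ ‖x - (A.1) • (1 : H →L[ℂ] H)‖ +
              ‖(A.1) • (1 : H →L[ℂ] H) - ‖x‖ • (1 : H →L[ℂ] H)‖ := norm_sub_le_norm_sub_add_norm_sub _ _ _
          _ ≤ A.1 * δ + A.1 * δ := add_le_add b1 b2
          _ ≤ 2 * ‖x‖ * δ + 2 * ‖x‖ * δ := by
              have := mul_le_mul_of_nonneg_right hA2 hδpos.le
              linarith
          _ ≤ ε := by
              have h4 : (0:ℝ) < 4 * ‖x‖ := by positivity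
              have := mul_le_mul_of_nonneg_left hde (le_of_lt h4)
              rw [mul_div_cancel₀ _ (ne_of_gt h4)] at this
              linarith
      have h0 : ‖x - ‖x‖ • (1 : H →L[ℂ] H)‖ ≤ 0 :=
        le_of_forall_pos_le_add fun ε hε => by simpa using key ε hε
      have := norm_le_zero_iff.mp h0
      exact sub_eq_zero.mp this
    · intro hxe
      refine le_antisymm ?_ (Real.iInf_nonneg fun A => norm_nonneg _)
      unfold Delta
      have step : (⨅ A : {A : ℝ // 0 < A}, ‖(1 : H →L[ℂ] H) - (A.1)⁻¹ • x‖) ≤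
          ‖(1 : H →L[ℂ] H) - (‖x‖)⁻¹ • x‖ := ciInf_le bdd ⟨‖x‖, hnx⟩
      calc (⨅ A : {A : ℝ // 0 < A}, ‖(1 : H →L[ℂ] H) - (A.1)⁻¹ • x‖) ≤ ‖(1 : H →L[ℂ] H) - (‖x‖)⁻¹ • x‖ := step
        _ = 0 := by
            nth_rewrite 2 [hxe]
            rw [smul_smul, inv_mul_cancel₀ (ne_of_gt hnx), one_smul, sub_self, norm_zero]
end

section
/- For any nonzero positive bounded operator x on a Hilbert space, Δ(x) = (sup σ(x) − inf σ(x)) / (sup σ(x) + inf σ(x)), where σ(x) denotes the spectrum of x. -/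
variable {H : Type*} [NormedAddCommGroup H] [InnerProductSpace ℂ H] [CompleteSpace H]

lemma spec_affine_map (x : H →L[ℂ] H) (A : ℝ) (hne' : (spectrum ℝ x).Nonempty)
    (hnt : Nontrivial (H →L[ℂ] H)) :
    spectrum ℝ ((1 : H →L[ℂ] H) - A⁻¹ • x) = (fun ν : ℝ => 1 - A⁻¹ * ν) '' spectrum ℝ x := by
  have h1 : (1 : H →L[ℂ] H) = algebraMap ℝ _ (1:ℝ) := by simp
  rw [h1, ← spectrum.singleton_sub_eq, spectrum.smul_eq_smul A⁻¹ x hne']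
  ext z
  simp only [Set.mem_sub, Set.mem_smul_set, Set.mem_singleton_iff, Set.mem_image]
  constructor
  · rintro ⟨a, rfl, b, ⟨ν, hν, rfl⟩, rfl⟩
    exact ⟨ν, hν, rfl⟩
  · rintro ⟨ν, hν, rfl⟩
    exact ⟨1, rfl, A⁻¹ * ν, ⟨ν, hν, rfl⟩, rfl⟩

set_option maxHeartbeats 1000000 in
theorem delta_eq_spectral_formula (x : H →L[ℂ] H) (hx : x.IsPositive)
    (hne : x ≠ 0) :
    Delta x = (sSup (spectrum ℝ x) - sInf (spectrum ℝ x)) /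
      (sSup (spectrum ℝ x) + sInf (spectrum ℝ x)) := by
  haveI hnt : Nontrivial (H →L[ℂ] H) := nontrivial_of_ne x 0 hne
  have hsa : IsSelfAdjoint x := hx.isSelfAdjoint
  have hne' : (spectrum ℝ x).Nonempty :=
    hsa.spectrumRestricts.image ▸ (spectrum.nonempty x).image _
  have hnonneg : ∀ c ∈ spectrum ℝ x, 0 ≤ c :=
    SpectrumRestricts.nnreal_iff.mp hx.spectrumRestricts
  have hub : ∀ c ∈ spectrum ℝ x, c ≤ ‖x‖ := fun c hc =>
    (Real.le_norm_self c).trans (spectrum.norm_le_norm_of_mem hc)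
  have hbddA : BddAbove (spectrum ℝ x) := ⟨‖x‖, fun c hc => hub c hc⟩
  have hbddB : BddBelow (spectrum ℝ x) := ⟨0, fun c hc => hnonneg c hc⟩
  set M := sSup (spectrum ℝ x) with hM
  set m := sInf (spectrum ℝ x) with hm
  have hMmem : ‖x‖ ∈ spectrum ℝ x := by
    rcases CStarAlgebra.norm_or_neg_norm_mem_spectrum hsa with h | h
    · exact h
    · have := hnonneg _ h
      have hx0 : ‖x‖ = 0 := le_antisymm (by linarith) (norm_nonneg x)
      exact absurd (norm_eq_zero.mp hx0) hne
  have hMeq : M = ‖x‖ :=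
    le_antisymm (csSup_le hne' hub) (le_csSup hbddA hMmem)
  have hMpos : 0 < M := hMeq ▸ norm_pos_iff.mpr hne
  have hm0 : 0 ≤ m := le_csInf hne' hnonneg
  have hmmem : m ∈ spectrum ℝ x :=
    (spectrum.isCompact (𝕜 := ℝ) x).sInf_mem hne'
  have hMmem' : M ∈ spectrum ℝ x := hMeq ▸ hMmem
  have hmM : m ≤ M := csInf_le_csSup hne' hbddB hbddA
  have hs : 0 < M + m := by linarith
  -- selfadjointness of the affine images
  have hysa : ∀ A : ℝ, IsSelfAdjoint ((1 : H →L[ℂ] H) - A⁻¹ • x) := fun A =>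
    (IsSelfAdjoint.one _).sub (IsSelfAdjoint.smul (r := A⁻¹) (star_trivial A⁻¹) hsa)
  have hbdd_range : BddBelow (Set.range fun A : {A : ℝ // 0 < A} =>
      ‖(1 : H →L[ℂ] H) - (A.1)⁻¹ • x‖) := ⟨0, by rintro r ⟨A, rfl⟩; exact norm_nonneg _⟩
  apply le_antisymm
  · -- Delta x ≤ (M - m)/(M + m), witnessed by A₀ = (M+m)/2
    have hA0 : (0:ℝ) < (M + m)/2 := by linarith
    refine le_trans (ciInf_le hbdd_range ⟨(M + m)/2, hA0⟩) ?_
    have hmain : ∀ ν ∈ spectrum ℝ x, |1 - ((M + m)/2)⁻¹ * ν| ≤ (M - m)/(M + m) := by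
      intro ν hν
      have hνm : m ≤ ν := csInf_le hbddB hν
      have hνM : ν ≤ M := le_csSup hbddA hν
      have key : 1 - ((M + m)/2)⁻¹ * ν = (M + m - 2*ν)/(M + m) := by
        field_simp
      have habs : |M + m - 2*ν| ≤ M - m := abs_le.mpr ⟨by linarith, by linarith⟩
      rw [key, abs_div, abs_of_pos hs]
      gcongr
    rcases CStarAlgebra.norm_or_neg_norm_mem_spectrum (hysa ((M + m)/2)) with h | h
    · rw [spec_affine_map x _ hne' hnt] at h
      obtain ⟨ν, hν, hzeq⟩ := h
      have hze : 1 - ((M + m)/2)⁻¹ * ν = ‖(1 : H →L[ℂ] H) - ((M + m)/2)⁻¹ • x‖ := hzeq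
      have := abs_le.mp (hmain ν hν)
      linarith [this.2]
    · rw [spec_affine_map x _ hne' hnt] at h
      obtain ⟨ν, hν, hzeq⟩ := h
      have hze : 1 - ((M + m)/2)⁻¹ * ν = -‖(1 : H →L[ℂ] H) - ((M + m)/2)⁻¹ • x‖ := hzeq
      have := abs_le.mp (hmain ν hν)
      linarith [this.1]
  · -- lower bound
    refine le_ciInf fun ⟨A, hA⟩ => ?_
    have hiA : 0 < A⁻¹ := inv_pos.mpr hA
    have h1 : |1 - A⁻¹ * m| ≤ ‖(1 : H →L[ℂ] H) - A⁻¹ • x‖ := by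
      have : (1 - A⁻¹ * m) ∈ spectrum ℝ ((1 : H →L[ℂ] H) - A⁻¹ • x) := by
        rw [spec_affine_map x _ hne' hnt]; exact ⟨m, hmmem, rfl⟩
      simpa using spectrum.norm_le_norm_of_mem this
    have h2 : |1 - A⁻¹ * M| ≤ ‖(1 : H →L[ℂ] H) - A⁻¹ • x‖ := by
      have : (1 - A⁻¹ * M) ∈ spectrum ℝ ((1 : H →L[ℂ] H) - A⁻¹ • x) := by
        rw [spec_affine_map x _ hne' hnt]; exact ⟨M, hMmem', rfl⟩
      simpa using spectrum.norm_le_norm_of_mem this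
    set t := ‖(1 : H →L[ℂ] H) - A⁻¹ • x‖ with ht
    have h1' : 1 - A⁻¹ * m ≤ t := (le_abs_self _).trans h1
    have h2' : A⁻¹ * M - 1 ≤ t := (neg_le_abs _ |>.trans h2 |> fun h => by
      have := (abs_le.mp h2).1; linarith)
    rw [div_le_iff₀ hs]
    nlinarith [mul_le_mul_of_nonneg_left h1' hMpos.le, mul_le_mul_of_nonneg_left h2' hm0]
end

section
/- For invertible positive bounded operators x and y on a Hilbert space, (‖x+y‖ + 1/‖(x+y)⁻¹‖)·Δ(x+y) ≤ (‖x‖ + 1/‖x⁻¹‖)·Δ(x) + (‖y‖ + 1/‖y⁻¹‖)·Δ(y). -/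
variable {H : Type*} [NormedAddCommGroup H] [InnerProductSpace ℂ H] [CompleteSpace H]

section Aux

lemma delta_aux_real {m M c A : ℝ} (hm : 0 < m) (hmM : m ≤ M) (hA : 0 < A)
    (h1 : |1 - A⁻¹ * m| ≤ c) (h2 : |1 - A⁻¹ * M| ≤ c) :
    (M - m) / (M + m) ≤ c := by
  have hMm : 0 < M + m := by linarith
  rw [div_le_iff₀ hMm]
  rcases le_or_gt 1 c with hc | hc
  · nlinarith
  · rw [abs_le] at h1 h2
    have ht : 1 - c ≤ A⁻¹ * m := by linarith [h1.2]
    have hT : A⁻¹ * M ≤ 1 + c := by linarith [h2.1]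
    have ht' : A * (1 - c) ≤ m := by
      have h := mul_le_mul_of_nonneg_left ht hA.le
      rwa [← mul_assoc, mul_inv_cancel₀ hA.ne', one_mul] at h
    have hT' : M ≤ A * (1 + c) := by
      have h := mul_le_mul_of_nonneg_left hT hA.le
      rwa [← mul_assoc, mul_inv_cancel₀ hA.ne', one_mul] at h
    nlinarith [mul_le_mul_of_nonneg_right ht' (by linarith : (0:ℝ) ≤ 1 + c),
      mul_le_mul_of_nonneg_right hT' (by linarith : (0:ℝ) ≤ 1 - c)]

variable [Nontrivial H]

lemma delta_core (z : H →L[ℂ] H) (hz : z.IsPositive) (hu : IsUnit z) :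
    (∀ t ∈ spectrum ℝ z, ‖Ring.inverse z‖⁻¹ ≤ t) ∧
    ‖Ring.inverse z‖⁻¹ ∈ spectrum ℝ z ∧
    0 < ‖Ring.inverse z‖⁻¹ ∧
    (‖z‖ + ‖Ring.inverse z‖⁻¹) * Delta z = ‖z‖ - ‖Ring.inverse z‖⁻¹ := by
  haveI : Nontrivial (H →L[ℂ] H) := by
    obtain ⟨v, hv⟩ := exists_ne (0 : H)
    exact nontrivial_of_ne 1 0 fun h => hv (by simpa using DFunLike.congr_fun h v)
  have hz' : (0 : H →L[ℂ] H) ≤ z := (ContinuousLinearMap.nonneg_iff_isPositive z).mpr hz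
  have hsa : IsSelfAdjoint z := hz.isSelfAdjoint
  set u := hu.unit with hu_def
  have huz : (u : H →L[ℂ] H) = z := hu.unit_spec
  have hRinv : Ring.inverse z = ((u⁻¹ : (H →L[ℂ] H)ˣ) : H →L[ℂ] H) := by
    rw [← huz, Ring.inverse_unit]
  have hinv_nonneg : (0 : H →L[ℂ] H) ≤ ((u⁻¹ : (H →L[ℂ] H)ˣ) : H →L[ℂ] H) :=
    CFC.inv_nonneg_of_nonneg u (huz ▸ hz')
  have hNpos : 0 < ‖Ring.inverse z‖ := by
    rw [hRinv]; exact norm_pos_iff.mpr (Units.ne_zero _)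
  set M := ‖z‖ with hM_def
  set m := ‖Ring.inverse z‖⁻¹ with hm_def
  have hm : 0 < m := inv_pos.mpr hNpos
  have spec_pos : ∀ t ∈ spectrum ℝ z, 0 < t := by
    intro t ht
    refine lt_of_le_of_ne (spectrum_nonneg_of_nonneg hz' ht) ?_
    rintro rfl
    exact spectrum.zero_notMem ℝ hu ht
  have le_M : ∀ t ∈ spectrum ℝ z, t ≤ M := fun t ht =>
    (Real.le_norm_self t).trans (spectrum.norm_le_norm_of_mem ht)
  have m_le : ∀ t ∈ spectrum ℝ z, m ≤ t := by
    intro t ht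
    have htpos := spec_pos t ht
    have hmem : t⁻¹ ∈ spectrum ℝ (Ring.inverse z) := by
      rw [hRinv]
      have : ((Units.mk0 t htpos.ne' : ℝˣ) : ℝ) ∈ spectrum ℝ ((u : H →L[ℂ] H)) := by
        simpa [huz] using ht
      simpa using spectrum.inv_mem_iff.mp this
    have : t⁻¹ ≤ ‖Ring.inverse z‖ :=
      (Real.le_norm_self _).trans (spectrum.norm_le_norm_of_mem hmem)
    rw [hm_def, inv_le_comm₀ hNpos htpos]
    exact this
  have M_mem : M ∈ spectrum ℝ z := CStarAlgebra.norm_mem_spectrum_of_nonneg hz'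
  have m_mem : m ∈ spectrum ℝ z := by
    have hN_mem : ‖Ring.inverse z‖ ∈ spectrum ℝ (Ring.inverse z) :=
      CStarAlgebra.norm_mem_spectrum_of_nonneg (hRinv ▸ hinv_nonneg)
    have : ((Units.mk0 ‖Ring.inverse z‖ hNpos.ne' : ℝˣ) : ℝ) ∈
        spectrum ℝ (((u⁻¹ : (H →L[ℂ] H)ˣ)) : H →L[ℂ] H) := by
      simpa [hRinv] using hN_mem
    have := spectrum.inv_mem_iff.mp this
    simpa [huz] using this
  have hmM : m ≤ M := (m_le M M_mem).trans_eq rfl |>.trans (le_M M M_mem) |>.trans (le_refl M)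
  have hMm : 0 < M + m := by linarith
  -- rewrite 1 - c • z as cfc
  have hrw : ∀ c : ℝ, (1 : H →L[ℂ] H) - c • z = cfc (fun t : ℝ => 1 - c * t) z := by
    intro c
    rw [cfc_sub (fun _ : ℝ => (1:ℝ)) (fun t : ℝ => c * t) z, cfc_const_one ℝ z,
      cfc_const_mul_id c z]
  have hbdd : BddBelow (Set.range fun A : {A : ℝ // 0 < A} =>
      ‖(1 : H →L[ℂ] H) - (A.1)⁻¹ • z‖) := ⟨0, by rintro r ⟨A, rfl⟩; exact norm_nonneg _⟩
  have upper : Delta z ≤ (M - m) / (M + m) := by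
    refine le_trans (ciInf_le hbdd ⟨(M + m)/2, by positivity⟩) ?_
    rw [hrw]
    refine norm_cfc_le (div_nonneg (by linarith) hMm.le) fun t ht => ?_
    have h1 := m_le t ht
    have h2 := le_M t ht
    have hkey : 1 - ((M + m)/2)⁻¹ * t = (M + m - 2*t) / (M + m) := by
      field_simp
    rw [Real.norm_eq_abs, hkey, abs_div, abs_of_pos hMm]
    gcongr
    rw [abs_le]
    constructor <;> linarith
  have lower : (M - m) / (M + m) ≤ Delta z := by
    refine le_ciInf fun A => ?_
    obtain ⟨A, hA⟩ := A
    refine delta_aux_real hm hmM hA ?_ ?_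
    · have := norm_apply_le_norm_cfc (fun t : ℝ => 1 - A⁻¹ * t) z m_mem
      rw [← hrw, Real.norm_eq_abs] at this
      exact this
    · have := norm_apply_le_norm_cfc (fun t : ℝ => 1 - A⁻¹ * t) z M_mem
      rw [← hrw, Real.norm_eq_abs] at this
      exact this
  have hDelta : Delta z = (M - m) / (M + m) := le_antisymm upper lower
  exact ⟨m_le, m_mem, hm, by rw [hDelta, mul_div_cancel₀ _ hMm.ne']⟩

end Aux

theorem delta_add_weighted (x y : H →L[ℂ] H) (hx : x.IsPositive) (hy : y.IsPositive)
    (hux : IsUnit x) (huy : IsUnit y) :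
    (‖x + y‖ + ‖Ring.inverse (x + y)‖⁻¹) * Delta (x + y) ≤
      (‖x‖ + ‖Ring.inverse x‖⁻¹) * Delta x + (‖y‖ + ‖Ring.inverse y‖⁻¹) * Delta y := by
  obtain hH | hH := subsingleton_or_nontrivial H
  · haveI : Subsingleton (H →L[ℂ] H) := ⟨fun a b => ContinuousLinearMap.ext fun v =>
      Subsingleton.elim _ _⟩
    have hn : ∀ w : H →L[ℂ] H, ‖w‖ = 0 := fun w => by
      rw [Subsingleton.elim w 0, norm_zero]
    simp only [hn]
    norm_num
  · have hx' : (0 : H →L[ℂ] H) ≤ x := (ContinuousLinearMap.nonneg_iff_isPositive x).mpr hx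
    have hy' : (0 : H →L[ℂ] H) ≤ y := (ContinuousLinearMap.nonneg_iff_isPositive y).mpr hy
    have huz : IsUnit (x + y) :=
      CStarAlgebra.isUnit_of_le x (le_add_of_nonneg_right hy') ⟨hx', hux⟩
    obtain ⟨mx_le, mx_mem, mx_pos, hx_eq⟩ := delta_core x hx hux
    obtain ⟨my_le, my_mem, my_pos, hy_eq⟩ := delta_core y hy huy
    obtain ⟨mz_le, mz_mem, mz_pos, hz_eq⟩ := delta_core (x + y) (hx.add hy) huz
    rw [hx_eq, hy_eq, hz_eq]
    have hsax : IsSelfAdjoint x := hx.isSelfAdjoint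
    have hsay : IsSelfAdjoint y := hy.isSelfAdjoint
    have hsaz : IsSelfAdjoint (x + y) := (hx.add hy).isSelfAdjoint
    have hmono : ‖Ring.inverse x‖⁻¹ + ‖Ring.inverse y‖⁻¹ ≤ ‖Ring.inverse (x + y)‖⁻¹ := by
      have h1 : algebraMap ℝ (H →L[ℂ] H) (‖Ring.inverse x‖⁻¹) ≤ x :=
        (algebraMap_le_iff_le_spectrum hsax).mpr mx_le
      have h2 : algebraMap ℝ (H →L[ℂ] H) (‖Ring.inverse y‖⁻¹) ≤ y :=
        (algebraMap_le_iff_le_spectrum hsay).mpr my_le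
      have h3 : algebraMap ℝ (H →L[ℂ] H) (‖Ring.inverse x‖⁻¹ + ‖Ring.inverse y‖⁻¹) ≤ x + y := by
        rw [map_add]; exact add_le_add h1 h2
      exact (algebraMap_le_iff_le_spectrum hsaz).mp h3 _ mz_mem
    have htri : ‖x + y‖ ≤ ‖x‖ + ‖y‖ := norm_add_le x y
    linarith
end

section
/- For any two positive semidefinite 2×2 complex matrices X and Y, Δ(X+Y) ≤ max(Δ(X), Δ(Y)), where for a positive semidefinite matrix A with eigenvalues t₁ ≥ t₂ ≥ 0 (not both zero) Δ(A) = (t₁ − t₂)/(t₁ + t₂) and Δ(0) = 1. -/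
open scoped ComplexOrder
open Matrix

namespace DeltaMAux

variable {n : Type*} [Fintype n] [DecidableEq n]

lemma star_dot_eigenvector {A : Matrix n n ℂ} (hA : A.IsHermitian) (i : n) :
    star ⇑(hA.eigenvectorBasis i) ⬝ᵥ ⇑(hA.eigenvectorBasis i) = 1 := by
  have h := hA.eigenvectorBasis.orthonormal.1 i
  have h2 := EuclideanSpace.inner_eq_star_dotProduct (hA.eigenvectorBasis i)
      (hA.eigenvectorBasis i)
  rw [inner_self_eq_norm_sq_to_K, h] at h2
  rw [dotProduct_comm]
  simpa using h2.symm

lemma smul_one_sub_posSemidef {A : Matrix n n ℂ} (hA : A.IsHermitian) {c : ℝ}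
    (hc : ∀ i, hA.eigenvalues i ≤ c) : (((c : ℂ) • 1 - A)).PosSemidef := by
  have key : (c : ℂ) • (1 : Matrix n n ℂ) - A
      = (hA.eigenvectorUnitary : Matrix n n ℂ) *
        diagonal (fun i => ((c - hA.eigenvalues i : ℝ) : ℂ)) *
        (hA.eigenvectorUnitary : Matrix n n ℂ)ᴴ := by
    have hd : diagonal (fun i => ((c - hA.eigenvalues i : ℝ) : ℂ))
        = (c : ℂ) • 1 - diagonal (RCLike.ofReal ∘ hA.eigenvalues) := by
      rw [smul_one_eq_diagonal, diagonal_sub]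
      funext i; simp
    rw [hd, mul_sub, sub_mul]
    congr 1
    · rw [mul_smul_comm, mul_one, smul_mul_assoc, ← star_eq_conjTranspose,
        Matrix.mem_unitaryGroup_iff.mp hA.eigenvectorUnitary.2]
    · rw [← star_eq_conjTranspose]; exact hA.spectral_theorem
  rw [key]
  exact (posSemidef_diagonal_iff.mpr fun i =>
    Complex.zero_le_real.mpr (sub_nonneg.mpr (hc i))).mul_mul_conjTranspose_same _

lemma sub_smul_one_posSemidef {A : Matrix n n ℂ} (hA : A.IsHermitian) {c : ℝ}
    (hc : ∀ i, c ≤ hA.eigenvalues i) : ((A - (c : ℂ) • 1)).PosSemidef := by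
  have key : A - (c : ℂ) • (1 : Matrix n n ℂ)
      = (hA.eigenvectorUnitary : Matrix n n ℂ) *
        diagonal (fun i => ((hA.eigenvalues i - c : ℝ) : ℂ)) *
        (hA.eigenvectorUnitary : Matrix n n ℂ)ᴴ := by
    have hd : diagonal (fun i => ((hA.eigenvalues i - c : ℝ) : ℂ))
        = diagonal (RCLike.ofReal ∘ hA.eigenvalues) - (c : ℂ) • 1 := by
      rw [smul_one_eq_diagonal, diagonal_sub]
      funext i; simp
    rw [hd, mul_sub, sub_mul]
    congr 1
    · rw [← star_eq_conjTranspose]; exact hA.spectral_theorem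
    · rw [mul_smul_comm, mul_one, smul_mul_assoc, ← star_eq_conjTranspose,
        Matrix.mem_unitaryGroup_iff.mp hA.eigenvectorUnitary.2]
  rw [key]
  exact (posSemidef_diagonal_iff.mpr fun i =>
    Complex.zero_le_real.mpr (sub_nonneg.mpr (hc i))).mul_mul_conjTranspose_same _

lemma re_dot_le {A : Matrix n n ℂ} (hA : A.IsHermitian) {v : n → ℂ}
    (hv : star v ⬝ᵥ v = 1) {c : ℝ} (hc : ∀ i, hA.eigenvalues i ≤ c) :
    RCLike.re (star v ⬝ᵥ (A *ᵥ v)) ≤ c := by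
  have h := (smul_one_sub_posSemidef hA hc).re_dotProduct_nonneg v
  rw [sub_mulVec, smul_mulVec, one_mulVec, dotProduct_sub, dotProduct_smul,
    hv, smul_eq_mul, mul_one, map_sub] at h
  have hc' : RCLike.re ((c : ℂ)) = c := by simp
  linarith [h, hc']

lemma le_re_dot {A : Matrix n n ℂ} (hA : A.IsHermitian) {v : n → ℂ}
    (hv : star v ⬝ᵥ v = 1) {c : ℝ} (hc : ∀ i, c ≤ hA.eigenvalues i) :
    c ≤ RCLike.re (star v ⬝ᵥ (A *ᵥ v)) := by
  have h := (sub_smul_one_posSemidef hA hc).re_dotProduct_nonneg v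
  rw [sub_mulVec, smul_mulVec, one_mulVec, dotProduct_sub, dotProduct_smul,
    hv, smul_eq_mul, mul_one, map_sub] at h
  have hc' : RCLike.re ((c : ℂ)) = c := by simp
  linarith [h, hc']

lemma sum_eigs {A : Matrix n n ℂ} (hA : A.IsHermitian) :
    ∑ i, (hA.eigenvalues i : ℂ) = A.trace := by
  conv_rhs => rw [hA.spectral_theorem, Unitary.conjStarAlgAut_apply]
  rw [trace_mul_cycle, Matrix.mem_unitaryGroup_iff'.mp hA.eigenvectorUnitary.2, one_mul,
    trace_diagonal]
  rfl

lemma eq_zero_of_eigs {A : Matrix n n ℂ} (hA : A.IsHermitian)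
    (h : ∀ i, hA.eigenvalues i = 0) : A = 0 := by
  have hd : diagonal (RCLike.ofReal ∘ hA.eigenvalues) = (0 : Matrix n n ℂ) := by
    ext i j
    by_cases hij : i = j <;> simp [diagonal, hij, h]
  rw [hA.spectral_theorem, hd, map_zero]

lemma sup2 (f : Fin 2 → ℝ) : (⨆ i, f i) = max (f 0) (f 1) := by
  apply le_antisymm
  · refine ciSup_le fun i => ?_
    fin_cases i
    · exact le_max_left _ _
    · exact le_max_right _ _
  · exact max_le (le_ciSup (Finite.bddAbove_range f) 0) (le_ciSup (Finite.bddAbove_range f) 1)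

lemma inf2 (f : Fin 2 → ℝ) : (⨅ i, f i) = min (f 0) (f 1) := by
  apply le_antisymm
  · exact le_min (ciInf_le (Finite.bddBelow_range f) 0) (ciInf_le (Finite.bddBelow_range f) 1)
  · refine le_ciInf fun i => ?_
    fin_cases i
    · exact min_le_left _ _
    · exact min_le_right _ _

lemma sup_pos {A : Matrix (Fin 2) (Fin 2) ℂ} (hA : A.PosSemidef)
    (hH : A.IsHermitian) (h : A ≠ 0) : 0 < ⨆ i, hH.eigenvalues i := by
  by_contra hle
  push_neg at hle
  have hz : ∀ i, hH.eigenvalues i = 0 := fun i =>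
    le_antisymm ((le_ciSup (Finite.bddAbove_range _) i).trans hle)
      (hA.eigenvalues_nonneg i)
  exact h (eq_zero_of_eigs hH hz)

end DeltaMAux

/-- Michelson contrast of a Hermitian matrix, via its eigenvalues;
by convention `DeltaM 0 = 1`. -/
noncomputable def DeltaM {n : ℕ} (A : Matrix (Fin n) (Fin n) ℂ)
    (hA : A.IsHermitian) : ℝ :=
  if A = 0 then 1 else
    ((⨆ i, hA.eigenvalues i) - ⨅ i, hA.eigenvalues i) /
      ((⨆ i, hA.eigenvalues i) + ⨅ i, hA.eigenvalues i)

theorem deltaM_add_le_max_two (X Y : Matrix (Fin 2) (Fin 2) ℂ)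
    (hX : X.PosSemidef) (hY : Y.PosSemidef) :
    DeltaM (X + Y) (hX.1.add hY.1) ≤ max (DeltaM X hX.1) (DeltaM Y hY.1) := by
  classical
  by_cases hT0 : X + Y = 0
  · -- then X = 0 and the max is 1
    have hX0 : X = 0 := by
      apply DeltaMAux.eq_zero_of_eigs hX.1
      intro i
      have h1 := hX.dotProduct_mulVec_nonneg ⇑(hX.1.eigenvectorBasis i)
      have h2 := hY.dotProduct_mulVec_nonneg ⇑(hX.1.eigenvectorBasis i)
      set v : Fin 2 → ℂ := ⇑(hX.1.eigenvectorBasis i) with hv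
      have hsum : star v ⬝ᵥ (X *ᵥ v) + star v ⬝ᵥ (Y *ᵥ v) = 0 := by
        rw [← dotProduct_add, ← add_mulVec, hT0, zero_mulVec, dotProduct_zero]
      have hzero : star v ⬝ᵥ (X *ᵥ v) = 0 := by
        refine le_antisymm ?_ h1
        calc star v ⬝ᵥ (X *ᵥ v) ≤ star v ⬝ᵥ (X *ᵥ v) + star v ⬝ᵥ (Y *ᵥ v) :=
              le_add_of_nonneg_right h2
          _ = 0 := hsum
      rw [hX.1.eigenvalues_eq]
      rw [← hv, hzero]
      simp
    have h1 : DeltaM (X + Y) (hX.1.add hY.1) = 1 := by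
      simp only [DeltaM, if_pos hT0]
    have h2 : DeltaM X hX.1 = 1 := by simp only [DeltaM, if_pos hX0]
    rw [h1, ← h2]
    exact le_max_left _ _
  · have hTpsd : (X + Y).PosSemidef := hX.add hY
    have hT : (X + Y).IsHermitian := hX.1.add hY.1
    -- basic facts about the eigenvalues of X + Y
    have hbT0 : 0 ≤ ⨅ i, (hX.1.add hY.1).eigenvalues i :=
      le_ciInf fun i => hTpsd.eigenvalues_nonneg i
    have hsTpos : 0 < ⨆ i, (hX.1.add hY.1).eigenvalues i :=
      DeltaMAux.sup_pos hTpsd (hX.1.add hY.1) hT0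
    have hdT : 0 < (⨆ i, (hX.1.add hY.1).eigenvalues i)
        + ⨅ i, (hX.1.add hY.1).eigenvalues i := by linarith
    -- Weyl-type bounds
    have unit : ∀ j, star ⇑((hX.1.add hY.1).eigenvectorBasis j) ⬝ᵥ
        ⇑((hX.1.add hY.1).eigenvectorBasis j) = 1 :=
      DeltaMAux.star_dot_eigenvector (hX.1.add hY.1)
    have split : ∀ j, (hX.1.add hY.1).eigenvalues j
        = RCLike.re (star ⇑((hX.1.add hY.1).eigenvectorBasis j) ⬝ᵥ
            (X *ᵥ ⇑((hX.1.add hY.1).eigenvectorBasis j)))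
          + RCLike.re (star ⇑((hX.1.add hY.1).eigenvectorBasis j) ⬝ᵥ
            (Y *ᵥ ⇑((hX.1.add hY.1).eigenvectorBasis j))) := by
      intro j
      rw [(hX.1.add hY.1).eigenvalues_eq, add_mulVec, dotProduct_add, map_add]
    have hsT_le : (⨆ i, (hX.1.add hY.1).eigenvalues i)
        ≤ (⨆ i, hX.1.eigenvalues i) + ⨆ i, hY.1.eigenvalues i := by
      refine ciSup_le fun j => ?_
      rw [split j]
      exact add_le_add
        (DeltaMAux.re_dot_le hX.1 (unit j)
          fun i => le_ciSup (Finite.bddAbove_range _) i)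
        (DeltaMAux.re_dot_le hY.1 (unit j)
          fun i => le_ciSup (Finite.bddAbove_range _) i)
    have hbT_ge : (⨅ i, hX.1.eigenvalues i) + (⨅ i, hY.1.eigenvalues i)
        ≤ ⨅ i, (hX.1.add hY.1).eigenvalues i := by
      refine le_ciInf fun j => ?_
      rw [split j]
      exact add_le_add
        (DeltaMAux.le_re_dot hX.1 (unit j)
          fun i => ciInf_le (Finite.bddBelow_range _) i)
        (DeltaMAux.le_re_dot hY.1 (unit j)
          fun i => ciInf_le (Finite.bddBelow_range _) i)
    -- trace identity
    have htr : ((⨆ i, hX.1.eigenvalues i) + ⨅ i, hX.1.eigenvalues i)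
        + ((⨆ i, hY.1.eigenvalues i) + ⨅ i, hY.1.eigenvalues i)
        = (⨆ i, (hX.1.add hY.1).eigenvalues i)
          + ⨅ i, (hX.1.add hY.1).eigenvalues i := by
      have e1 := DeltaMAux.sum_eigs hX.1
      have e2 := DeltaMAux.sum_eigs hY.1
      have e3 := DeltaMAux.sum_eigs (hX.1.add hY.1)
      have e4 : (X + Y).trace = X.trace + Y.trace := trace_add X Y
      rw [Fin.sum_univ_two] at e1 e2 e3
      have key : ((hX.1.eigenvalues 0 + hX.1.eigenvalues 1
            + (hY.1.eigenvalues 0 + hY.1.eigenvalues 1) : ℝ) : ℂ)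
          = (((hX.1.add hY.1).eigenvalues 0 + (hX.1.add hY.1).eigenvalues 1 : ℝ) : ℂ) := by
        push_cast
        rw [e1, e2, e3, e4]
      have keyr : hX.1.eigenvalues 0 + hX.1.eigenvalues 1
            + (hY.1.eigenvalues 0 + hY.1.eigenvalues 1)
          = (hX.1.add hY.1).eigenvalues 0 + (hX.1.add hY.1).eigenvalues 1 := by
        exact_mod_cast key
      have mm : ∀ a b : ℝ, max a b + min a b = a + b := fun a b => by
        rw [add_comm, min_add_max]
      rw [DeltaMAux.sup2, DeltaMAux.inf2, DeltaMAux.sup2, DeltaMAux.inf2,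
        DeltaMAux.sup2, DeltaMAux.inf2, mm, mm, mm]
      exact keyr
    by_cases hX0 : X = 0
    · have h2 : DeltaM X hX.1 = 1 := by simp only [DeltaM, if_pos hX0]
      have hle1 : DeltaM (X + Y) (hX.1.add hY.1) ≤ 1 := by
        simp only [DeltaM, if_neg hT0]
        rw [div_le_one hdT]
        linarith
      rw [← h2] at hle1
      exact hle1.trans (le_max_left _ _)
    by_cases hY0 : Y = 0
    · have h2 : DeltaM Y hY.1 = 1 := by simp only [DeltaM, if_pos hY0]
      have hle1 : DeltaM (X + Y) (hX.1.add hY.1) ≤ 1 := by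
        simp only [DeltaM, if_neg hT0]
        rw [div_le_one hdT]
        linarith
      rw [← h2] at hle1
      exact hle1.trans (le_max_right _ _)
    · -- both X and Y nonzero
      have hsX : 0 < ⨆ i, hX.1.eigenvalues i := DeltaMAux.sup_pos hX hX.1 hX0
      have hiX : 0 ≤ ⨅ i, hX.1.eigenvalues i :=
        le_ciInf fun i => hX.eigenvalues_nonneg i
      have hdX : 0 < (⨆ i, hX.1.eigenvalues i) + ⨅ i, hX.1.eigenvalues i := by linarith
      have hsY : 0 < ⨆ i, hY.1.eigenvalues i := DeltaMAux.sup_pos hY hY.1 hY0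
      have hiY : 0 ≤ ⨅ i, hY.1.eigenvalues i :=
        le_ciInf fun i => hY.eigenvalues_nonneg i
      have hdY : 0 < (⨆ i, hY.1.eigenvalues i) + ⨅ i, hY.1.eigenvalues i := by linarith
      simp only [DeltaM, if_neg hT0, if_neg hX0, if_neg hY0]
      rw [div_le_iff₀ hdT]
      set m : ℝ := max
        (((⨆ i, hX.1.eigenvalues i) - ⨅ i, hX.1.eigenvalues i) /
          ((⨆ i, hX.1.eigenvalues i) + ⨅ i, hX.1.eigenvalues i))
        (((⨆ i, hY.1.eigenvalues i) - ⨅ i, hY.1.eigenvalues i) /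
          ((⨆ i, hY.1.eigenvalues i) + ⨅ i, hY.1.eigenvalues i)) with hm
      have hXisX : (⨅ i, hX.1.eigenvalues i) ≤ ⨆ i, hX.1.eigenvalues i :=
        (ciInf_le (Finite.bddBelow_range _) 0).trans
          (le_ciSup (Finite.bddAbove_range _) 0)
      have hm0 : 0 ≤ m :=
        le_trans (div_nonneg (by linarith) hdX.le) (le_max_left _ _)
      have hm1 : (⨆ i, hX.1.eigenvalues i) - (⨅ i, hX.1.eigenvalues i)
          ≤ m * ((⨆ i, hX.1.eigenvalues i) + ⨅ i, hX.1.eigenvalues i) :=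
        (div_le_iff₀ hdX).mp (le_max_left _ _)
      have hm2 : (⨆ i, hY.1.eigenvalues i) - (⨅ i, hY.1.eigenvalues i)
          ≤ m * ((⨆ i, hY.1.eigenvalues i) + ⨅ i, hY.1.eigenvalues i) :=
        (div_le_iff₀ hdY).mp (le_max_right _ _)
      have hmul : m * ((⨆ i, hX.1.eigenvalues i) + ⨅ i, hX.1.eigenvalues i)
          + m * ((⨆ i, hY.1.eigenvalues i) + ⨅ i, hY.1.eigenvalues i)
          = m * ((⨆ i, (hX.1.add hY.1).eigenvalues i)
            + ⨅ i, (hX.1.add hY.1).eigenvalues i) := by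
        rw [← htr]; ring
      linarith
end

section
/- For any two positive semidefinite n×n complex matrices X and Y, Δ(X+Y) ≤ max(Δ(X), Δ(Y)), where Δ(A) = (λ_max(A) − λ_min(A))/(λ_max(A) + λ_min(A)) for nonzero positive semidefinite A, with λ_max, λ_min the largest and smallest eigenvalues, and Δ(0) = 1. -/
open scoped ComplexOrder

open Matrix in
/-- If all eigenvalues of a Hermitian matrix `A` are at most `c`,
then `c • 1 - A` is positive semidefinite. -/
lemma auxSmulSubPosSemidef {n : ℕ} {A : Matrix (Fin n) (Fin n) ℂ} (hA : A.IsHermitian)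
    {c : ℝ} (h : ∀ i, hA.eigenvalues i ≤ c) :
    (((c : ℂ) • (1 : Matrix (Fin n) (Fin n) ℂ)) - A).PosSemidef := by
  set U : Matrix (Fin n) (Fin n) ℂ := (hA.eigenvectorUnitary : Matrix (Fin n) (Fin n) ℂ) with hU
  have hU2 : U * star U = 1 := (Matrix.mem_unitaryGroup_iff).mp hA.eigenvectorUnitary.2
  have key : ((c : ℂ) • (1 : Matrix (Fin n) (Fin n) ℂ)) - A
      = U * diagonal (fun i => ((c - hA.eigenvalues i : ℝ) : ℂ)) * star U := by
    conv_lhs => rw [hA.spectral_theorem, Unitary.conjStarAlgAut_apply]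
    have h1 : ((c : ℂ) • (1 : Matrix (Fin n) (Fin n) ℂ))
        = U * ((c : ℂ) • (1 : Matrix (Fin n) (Fin n) ℂ)) * star U := by
      rw [Matrix.mul_smul, Matrix.smul_mul, mul_one, hU2]
    rw [h1, ← Matrix.sub_mul, ← Matrix.mul_sub]
    congr 1
    congr 1
    rw [Matrix.smul_one_eq_diagonal, Matrix.diagonal_sub]
    funext i
    push_cast
    simp
  rw [key, Matrix.star_eq_conjTranspose]
  refine Matrix.PosSemidef.mul_mul_conjTranspose_same ?_ U
  refine Matrix.posSemidef_diagonal_iff.mpr fun i => ?_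
  rw [Complex.zero_le_real]
  linarith [h i]

open Matrix in
/-- If all eigenvalues of a Hermitian matrix `A` are at least `c`,
then `A - c • 1` is positive semidefinite. -/
lemma auxSubSmulPosSemidef {n : ℕ} {A : Matrix (Fin n) (Fin n) ℂ} (hA : A.IsHermitian)
    {c : ℝ} (h : ∀ i, c ≤ hA.eigenvalues i) :
    (A - ((c : ℂ) • (1 : Matrix (Fin n) (Fin n) ℂ))).PosSemidef := by
  set U : Matrix (Fin n) (Fin n) ℂ := (hA.eigenvectorUnitary : Matrix (Fin n) (Fin n) ℂ) with hU
  have hU2 : U * star U = 1 := (Matrix.mem_unitaryGroup_iff).mp hA.eigenvectorUnitary.2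
  have key : A - ((c : ℂ) • (1 : Matrix (Fin n) (Fin n) ℂ))
      = U * diagonal (fun i => ((hA.eigenvalues i - c : ℝ) : ℂ)) * star U := by
    conv_lhs => rw [hA.spectral_theorem, Unitary.conjStarAlgAut_apply]
    have h1 : ((c : ℂ) • (1 : Matrix (Fin n) (Fin n) ℂ))
        = U * ((c : ℂ) • (1 : Matrix (Fin n) (Fin n) ℂ)) * star U := by
      rw [Matrix.mul_smul, Matrix.smul_mul, mul_one, hU2]
    rw [h1, ← Matrix.sub_mul, ← Matrix.mul_sub]
    congr 1
    congr 1
    rw [Matrix.smul_one_eq_diagonal, Matrix.diagonal_sub]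
    funext i
    push_cast
    simp
  rw [key, Matrix.star_eq_conjTranspose]
  refine Matrix.PosSemidef.mul_mul_conjTranspose_same ?_ U
  refine Matrix.posSemidef_diagonal_iff.mpr fun i => ?_
  rw [Complex.zero_le_real]
  linarith [h i]

open Matrix in
lemma auxDotEigen {n : ℕ} {A : Matrix (Fin n) (Fin n) ℂ} (hA : A.IsHermitian) (i : Fin n) :
    star (⇑(hA.eigenvectorBasis i)) ⬝ᵥ (⇑(hA.eigenvectorBasis i)) = 1 := by
  have h2 := EuclideanSpace.inner_eq_star_dotProduct (hA.eigenvectorBasis i)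
      (hA.eigenvectorBasis i)
  rw [inner_self_eq_norm_sq_to_K, hA.eigenvectorBasis.orthonormal.1 i] at h2
  norm_num at h2
  rw [dotProduct_comm]; exact h2.symm

open Matrix in
/-- If `c • 1 - A` is positive semidefinite, every eigenvalue of `A` is at most `c`. -/
lemma auxEigenvalueLe {n : ℕ} {A : Matrix (Fin n) (Fin n) ℂ} (hA : A.IsHermitian) {c : ℝ}
    (h : (((c : ℂ) • (1 : Matrix (Fin n) (Fin n) ℂ)) - A).PosSemidef) (i : Fin n) :
    hA.eigenvalues i ≤ c := by
  have h1 := h.re_dotProduct_nonneg ⇑(hA.eigenvectorBasis i)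
  rw [Matrix.sub_mulVec, dotProduct_sub, Matrix.smul_mulVec, Matrix.one_mulVec,
    dotProduct_smul, auxDotEigen hA i, smul_eq_mul, mul_one, map_sub] at h1
  rw [hA.eigenvalues_eq i]
  have hc : RCLike.re ((c : ℂ)) = c := by simp
  linarith [h1]

open Matrix in
/-- If `A - c • 1` is positive semidefinite, every eigenvalue of `A` is at least `c`. -/
lemma auxLeEigenvalue {n : ℕ} {A : Matrix (Fin n) (Fin n) ℂ} (hA : A.IsHermitian) {c : ℝ}
    (h : (A - ((c : ℂ) • (1 : Matrix (Fin n) (Fin n) ℂ))).PosSemidef) (i : Fin n) :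
    c ≤ hA.eigenvalues i := by
  have h1 := h.re_dotProduct_nonneg ⇑(hA.eigenvectorBasis i)
  rw [Matrix.sub_mulVec, dotProduct_sub, Matrix.smul_mulVec, Matrix.one_mulVec,
    dotProduct_smul, auxDotEigen hA i, smul_eq_mul, mul_one, map_sub] at h1
  rw [hA.eigenvalues_eq i]
  have hc : RCLike.re ((c : ℂ)) = c := by simp
  linarith [h1]

open Matrix in
/-- A Hermitian matrix with all eigenvalues zero is zero. -/
lemma auxEqZero {n : ℕ} {A : Matrix (Fin n) (Fin n) ℂ} (hA : A.IsHermitian)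
    (h : ∀ i, hA.eigenvalues i = 0) : A = 0 := by
  have hd : Matrix.diagonal (RCLike.ofReal ∘ hA.eigenvalues : Fin n → ℂ) = 0 := by
    ext i j; simp [Matrix.diagonal_apply, h]
  rw [hA.spectral_theorem, hd, map_zero]

theorem deltaM_add_le_max (n : ℕ) (X Y : Matrix (Fin n) (Fin n) ℂ)
    (hX : X.PosSemidef) (hY : Y.PosSemidef) :
    DeltaM (X + Y) (hX.1.add hY.1) ≤ max (DeltaM X hX.1) (DeltaM Y hY.1) := by
  by_cases hXY : X + Y = 0
  · -- then X = Y = 0 and everything is 1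
    have hYX : Y = -X := eq_neg_of_add_eq_zero_right hXY
    have hX0 : X = 0 := by
      apply auxEqZero hX.1
      intro i
      refine le_antisymm ?_ (hX.eigenvalues_nonneg i)
      refine auxEigenvalueLe hX.1 (c := 0) ?_ i
      have : (((0:ℝ) : ℂ) • (1 : Matrix (Fin n) (Fin n) ℂ)) - X = Y := by
        rw [hYX]; simp
      rw [this]; exact hY
    have hY0 : Y = 0 := by rw [hYX, hX0, neg_zero]
    simp only [DeltaM, if_pos hXY, if_pos hX0, if_pos hY0, max_self, le_refl]
  · have hn : 0 < n := by
      rcases Nat.eq_zero_or_pos n with h0 | h0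
      · exfalso; apply hXY; subst h0; ext i j; exact absurd i.2 (by omega)
      · exact h0
    haveI : Nonempty (Fin n) := Fin.pos_iff_nonempty.mp hn
    -- notation
    set Mx := ⨆ i, hX.1.eigenvalues i with hMx
    set mx := ⨅ i, hX.1.eigenvalues i with hmx
    set My := ⨆ i, hY.1.eigenvalues i with hMy
    set my := ⨅ i, hY.1.eigenvalues i with hmy
    set S := ⨆ i, (hX.1.add hY.1).eigenvalues i with hS
    set s := ⨅ i, (hX.1.add hY.1).eigenvalues i with hs
    have bddX : BddAbove (Set.range hX.1.eigenvalues) := (Set.finite_range _).bddAbove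
    have bddX' : BddBelow (Set.range hX.1.eigenvalues) := (Set.finite_range _).bddBelow
    have bddY : BddAbove (Set.range hY.1.eigenvalues) := (Set.finite_range _).bddAbove
    have bddY' : BddBelow (Set.range hY.1.eigenvalues) := (Set.finite_range _).bddBelow
    have bddS : BddAbove (Set.range (hX.1.add hY.1).eigenvalues) := (Set.finite_range _).bddAbove
    have bddS' : BddBelow (Set.range (hX.1.add hY.1).eigenvalues) := (Set.finite_range _).bddBelow
    -- basic facts
    have hmx0 : 0 ≤ mx := le_ciInf fun i => hX.eigenvalues_nonneg i
    have hmy0 : 0 ≤ my := le_ciInf fun i => hY.eigenvalues_nonneg i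
    have hs0 : 0 ≤ s := le_ciInf fun i => (hX.add hY).eigenvalues_nonneg i
    have hmxMx : mx ≤ Mx :=
      (ciInf_le bddX' (Classical.arbitrary _)).trans (le_ciSup bddX (Classical.arbitrary _))
    have hmyMy : my ≤ My :=
      (ciInf_le bddY' (Classical.arbitrary _)).trans (le_ciSup bddY (Classical.arbitrary _))
    have hsS : s ≤ S :=
      (ciInf_le bddS' (Classical.arbitrary _)).trans (le_ciSup bddS (Classical.arbitrary _))
    -- S > 0 since X + Y ≠ 0
    have hSpos : 0 < S := by
      rcases lt_or_ge 0 S with h | h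
      · exact h
      · exfalso; apply hXY; apply auxEqZero (hX.1.add hY.1)
        intro i
        exact le_antisymm ((le_ciSup bddS i).trans h) ((hX.add hY).eigenvalues_nonneg i)
    -- S ≤ Mx + My
    have hSle : S ≤ Mx + My := by
      refine ciSup_le fun i => auxEigenvalueLe (hX.1.add hY.1) ?_ i
      have hsum : (((Mx + My : ℝ) : ℂ) • (1 : Matrix (Fin n) (Fin n) ℂ)) - (X + Y)
          = ((((Mx : ℝ) : ℂ) • (1 : Matrix (Fin n) (Fin n) ℂ)) - X)
            + ((((My : ℝ) : ℂ) • (1 : Matrix (Fin n) (Fin n) ℂ)) - Y) := by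
        push_cast
        rw [add_smul]
        abel
      rw [hsum]
      exact (auxSmulSubPosSemidef hX.1 fun i => le_ciSup bddX i).add
        (auxSmulSubPosSemidef hY.1 fun i => le_ciSup bddY i)
    -- mx + my ≤ s
    have hsge : mx + my ≤ s := by
      refine le_ciInf fun i => auxLeEigenvalue (hX.1.add hY.1) ?_ i
      have hsum : (X + Y) - (((mx + my : ℝ) : ℂ) • (1 : Matrix (Fin n) (Fin n) ℂ))
          = (X - (((mx : ℝ) : ℂ) • (1 : Matrix (Fin n) (Fin n) ℂ)))
            + (Y - (((my : ℝ) : ℂ) • (1 : Matrix (Fin n) (Fin n) ℂ))) := by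
        push_cast
        rw [add_smul]
        abel
      rw [hsum]
      exact (auxSubSmulPosSemidef hX.1 fun i => ciInf_le bddX' i).add
        (auxSubSmulPosSemidef hY.1 fun i => ciInf_le bddY' i)
    -- unfold DeltaM on the left
    rw [DeltaM, if_neg hXY]
    have hSsden : 0 < S + s := by linarith
    by_cases hX0 : X = 0
    · refine le_max_of_le_left ?_
      rw [DeltaM, if_pos hX0]
      rw [div_le_one hSsden]; linarith
    by_cases hY0 : Y = 0
    · refine le_max_of_le_right ?_
      rw [DeltaM, if_pos hY0]
      rw [div_le_one hSsden]; linarith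
    -- both nonzero
    have hMxpos : 0 < Mx := by
      rcases lt_or_ge 0 Mx with h | h
      · exact h
      · exfalso; apply hX0; apply auxEqZero hX.1
        intro i; exact le_antisymm ((le_ciSup bddX i).trans h) (hX.eigenvalues_nonneg i)
    have hMypos : 0 < My := by
      rcases lt_or_ge 0 My with h | h
      · exact h
      · exfalso; apply hY0; apply auxEqZero hY.1
        intro i; exact le_antisymm ((le_ciSup bddY i).trans h) (hY.eigenvalues_nonneg i)
    rw [DeltaM, if_neg hX0, DeltaM, if_neg hY0]
    set r := max ((Mx - mx) / (Mx + mx)) ((My - my) / (My + my)) with hr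
    have hdx : 0 < Mx + mx := by linarith
    have hdy : 0 < My + my := by linarith
    have hr1 : Mx - mx ≤ r * (Mx + mx) := by
      rw [← div_le_iff₀ hdx]; exact le_max_left _ _
    have hr2 : My - my ≤ r * (My + my) := by
      rw [← div_le_iff₀ hdy]; exact le_max_right _ _
    -- step 1: monotone in S and s
    have step1 : (S - s) / (S + s) ≤ ((Mx + My) - (mx + my)) / ((Mx + My) + (mx + my)) := by
      rw [div_le_div_iff₀ hSsden (by linarith)]
      nlinarith [mul_le_mul hsge hSle (le_of_lt hSpos) hs0]
    -- step 2: mediant inequality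
    have step2 : ((Mx + My) - (mx + my)) / ((Mx + My) + (mx + my)) ≤ r := by
      rw [div_le_iff₀ (by linarith)]
      nlinarith [hr1, hr2]
    exact step1.trans step2
end

section
/- For any two positive bounded operators x and y on a Hilbert space, Δ(x+y) ≤ max(Δ(x), Δ(y)). -/
variable {H : Type*} [NormedAddCommGroup H] [InnerProductSpace ℂ H] [CompleteSpace H]

set_option synthInstance.maxHeartbeats 1000000 in
set_option maxHeartbeats 2000000 in
theorem delta_add_le_max (x y : H →L[ℂ] H) (hx : x.IsPositive) (hy : y.IsPositive) :
    Delta (x + y) ≤ max (Delta x) (Delta y) := by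
  have bdd : ∀ z : H →L[ℂ] H, BddBelow (Set.range
      fun A : {A : ℝ // 0 < A} => ‖(1 : H →L[ℂ] H) - (A.1)⁻¹ • z‖) := by
    intro z
    exact ⟨0, Set.forall_mem_range.2 fun _ => norm_nonneg _⟩
  have hne : Nonempty {A : ℝ // 0 < A} := ⟨⟨1, one_pos⟩⟩
  refine le_of_forall_pos_le_add fun ε hε => ?_
  obtain ⟨A, hA⟩ : ∃ A : {A : ℝ // 0 < A},
      ‖(1 : H →L[ℂ] H) - (A.1)⁻¹ • x‖ < Delta x + ε :=
    exists_lt_of_ciInf_lt (lt_add_of_pos_right (Delta x) hε)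
  obtain ⟨B, hB⟩ : ∃ B : {B : ℝ // 0 < B},
      ‖(1 : H →L[ℂ] H) - (B.1)⁻¹ • y‖ < Delta y + ε :=
    exists_lt_of_ciInf_lt (lt_add_of_pos_right (Delta y) hε)
  set a := A.1 with ha'
  set b := B.1 with hb'
  have hA0 : (0:ℝ) < a := A.2
  have hB0 : (0:ℝ) < b := B.2
  have hs0 : (0:ℝ) < a + b := by linarith
  have ha0 : a ≠ 0 := ne_of_gt hA0
  have hb0 : b ≠ 0 := ne_of_gt hB0
  have hs0' : a + b ≠ 0 := ne_of_gt hs0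
  set s := a + b
  have key : (1 : H →L[ℂ] H) - s⁻¹ • (x + y)
      = (a/s) • ((1 : H →L[ℂ] H) - a⁻¹ • x) + (b/s) • ((1 : H →L[ℂ] H) - b⁻¹ • y) := by
    have h1 : a/s * a⁻¹ = s⁻¹ := by field_simp
    have h2 : b/s * b⁻¹ = s⁻¹ := by field_simp
    have h3 : (a/s) • (1 : H →L[ℂ] H) + (b/s) • (1 : H →L[ℂ] H) = 1 := by
      rw [← add_smul]
      have : a/s + b/s = 1 := by field_simp; rfl
      rw [this, one_smul]
    rw [smul_sub, smul_sub, smul_smul, smul_smul, h1, h2, smul_add, sub_add_sub_comm, h3]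
  have step : Delta (x + y) ≤ ‖(1 : H →L[ℂ] H) - s⁻¹ • (x + y)‖ :=
    ciInf_le (bdd _) ⟨s, hs0⟩
  have hmax : ∀ z w : ℝ, z < Delta x + ε → w < Delta y + ε →
      z ≤ max (Delta x) (Delta y) + ε ∧ w ≤ max (Delta x) (Delta y) + ε := by
    intro z w hz hw
    exact ⟨le_trans hz.le (add_le_add_left (le_max_left _ _) ε),
      le_trans hw.le (add_le_add_left (le_max_right _ _) ε)⟩
  obtain ⟨hz, hw⟩ := hmax _ _ hA hB
  calc Delta (x + y) ≤ ‖(1 : H →L[ℂ] H) - s⁻¹ • (x + y)‖ := step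
    _ ≤ ‖(a/s) • ((1 : H →L[ℂ] H) - a⁻¹ • x)‖ + ‖(b/s) • ((1 : H →L[ℂ] H) - b⁻¹ • y)‖ := by
        rw [key]; exact norm_add_le _ _
    _ = (a/s) * ‖(1 : H →L[ℂ] H) - a⁻¹ • x‖ + (b/s) * ‖(1 : H →L[ℂ] H) - b⁻¹ • y‖ := by
        rw [norm_smul, norm_smul, Real.norm_eq_abs, Real.norm_eq_abs,
          abs_of_pos (div_pos hA0 hs0), abs_of_pos (div_pos hB0 hs0)]
    _ ≤ (a/s) * (max (Delta x) (Delta y) + ε) + (b/s) * (max (Delta x) (Delta y) + ε) := by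
        gcongr <;> positivity
    _ = max (Delta x) (Delta y) + ε := by field_simp; ring
end

section
/- For invertible positive bounded operators x and y with Δ(x) ≤ Δ(y), one has Δ(xy) ≤ Δ(y²); consequently Δ(xy) ≤ max(Δ(x²), Δ(y²)) for all positive x, y. -/
set_option maxHeartbeats 2000000
set_option synthInstance.maxHeartbeats 1000000

variable {H : Type*} [NormedAddCommGroup H] [InnerProductSpace ℂ H] [CompleteSpace H]

/-- Michelson contrast defined via the (real) spectrum, used for products `x*y`
of positive operators, which need not be positive but have spectrum in `[0,∞)`. -/
noncomputable def DeltaS (a : H →L[ℂ] H) : ℝ :=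
  (sSup (spectrum ℝ a) - sInf (spectrum ℝ a)) /
    (sSup (spectrum ℝ a) + sInf (spectrum ℝ a))

instance : Nonempty {A : ℝ // 0 < A} := ⟨⟨1, one_pos⟩⟩

lemma affine_mem {a : H →L[ℂ] H} {r t : ℝ} (hr : r ≠ 0) :
    1 - r * t ∈ spectrum ℝ ((1 : H →L[ℂ] H) - r • a) ↔ t ∈ spectrum ℝ a := by
  rw [spectrum.mem_iff, spectrum.mem_iff, not_iff_not]
  have hu : IsUnit (algebraMap ℝ (H →L[ℂ] H) r) :=
    (isUnit_iff_ne_zero.mpr hr).map (algebraMap ℝ (H →L[ℂ] H))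
  have key : algebraMap ℝ (H →L[ℂ] H) (1 - r * t) - (1 - r • a)
      = -(algebraMap ℝ (H →L[ℂ] H) r * (algebraMap ℝ (H →L[ℂ] H) t - a)) := by
    rw [← Algebra.smul_def]
    rw [Algebra.algebraMap_eq_smul_one, Algebra.algebraMap_eq_smul_one]
    module
  rw [key, IsUnit.neg_iff, ← hu.unit_spec]
  exact Units.isUnit_units_mul hu.unit _

lemma key_ineq {s t A : ℝ} (hs : 0 ≤ s) (hst : s ≤ t) (hA : 0 < A) :
    (t - s) / (t + s) ≤ max |1 - A⁻¹ * s| |1 - A⁻¹ * t| := by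
  have hA' : 0 < A⁻¹ := inv_pos.mpr hA
  rcases eq_or_lt_of_le (hs.trans hst) with h0 | ht
  · have hs0 : s = 0 := le_antisymm (hst.trans h0.symm.le) hs
    simp [← h0, hs0]
  · have hts : 0 < t + s := by linarith
    rcases le_total (2 * A) (t + s) with h | h
    · refine le_trans ?_ (le_max_right _ _)
      have h2 : A⁻¹ * t - 1 ≤ |1 - A⁻¹ * t| := by
        rw [abs_sub_comm]; exact le_abs_self _
      refine le_trans ?_ h2
      rw [div_le_iff₀ hts]
      have h4 : 2 ≤ A⁻¹ * (t + s) := by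
        nlinarith [mul_le_mul_of_nonneg_left h hA'.le, mul_inv_cancel₀ hA.ne']
      nlinarith [mul_le_mul_of_nonneg_left h4 ht.le]
    · refine le_trans ?_ (le_max_left _ _)
      refine le_trans ?_ (le_abs_self _)
      rw [div_le_iff₀ hts]
      have h4 : A⁻¹ * (t + s) ≤ 2 := by
        nlinarith [mul_le_mul_of_nonneg_left h hA'.le, mul_inv_cancel₀ hA.ne']
      nlinarith [mul_le_mul_of_nonneg_left h4 hs]

lemma delta_nonneg (a : H →L[ℂ] H) : 0 ≤ Delta a :=
  Real.iInf_nonneg fun _ => norm_nonneg _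

lemma le_delta [Nontrivial H] {a : H →L[ℂ] H} {s t : ℝ} (hs : 0 ≤ s) (hst : s ≤ t)
    (hsm : s ∈ spectrum ℝ a) (htm : t ∈ spectrum ℝ a) :
    (t - s) / (t + s) ≤ Delta a := by
  refine le_ciInf fun A => ?_
  obtain ⟨A, hA⟩ := A
  have hr : (A : ℝ)⁻¹ ≠ 0 := inv_ne_zero hA.ne'
  have h1 : |1 - A⁻¹ * s| ≤ ‖(1 : H →L[ℂ] H) - A⁻¹ • a‖ := by
    simpa using spectrum.norm_le_norm_of_mem ((affine_mem hr).mpr hsm)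
  have h2 : |1 - A⁻¹ * t| ≤ ‖(1 : H →L[ℂ] H) - A⁻¹ • a‖ := by
    simpa using spectrum.norm_le_norm_of_mem ((affine_mem hr).mpr htm)
  exact (key_ineq hs hst hA).trans (max_le h1 h2)

lemma norm_le_of_spec {b : H →L[ℂ] H} (hb : IsSelfAdjoint b) {c : ℝ} (hc : 0 ≤ c)
    (h : ∀ x ∈ spectrum ℝ b, |x| ≤ c) : ‖b‖ ≤ c := by
  conv_lhs => rw [← cfc_id ℝ b hb]
  exact norm_cfc_le hc (by simpa using h)

lemma delta_le_of_spec {a : H →L[ℂ] H} (ha : IsSelfAdjoint a) {m M : ℝ}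
    (hm : 0 < m) (hmM : m ≤ M) (hspec : spectrum ℝ a ⊆ Set.Icc m M) :
    Delta a ≤ (M - m) / (M + m) := by
  have hMpos : 0 < M := lt_of_lt_of_le hm hmM
  have hc : 0 < (m + M) / 2 := by linarith
  have hb : IsSelfAdjoint ((1 : H →L[ℂ] H) - ((m + M) / 2)⁻¹ • a) := by
    rw [IsSelfAdjoint, star_sub, star_one, star_smul, star_trivial, ha.star_eq]
  have hbdd : BddBelow (Set.range fun A : {A : ℝ // 0 < A} =>
      ‖(1 : H →L[ℂ] H) - (A.1)⁻¹ • a‖) := ⟨0, by rintro v ⟨i, rfl⟩; exact norm_nonneg _⟩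
  refine le_trans (ciInf_le hbdd ⟨(m + M) / 2, hc⟩) ?_
  · refine norm_le_of_spec hb (div_nonneg (by linarith) (by linarith)) ?_
    intro μ hμ
    have hcne : ((m + M) / 2 : ℝ) ≠ 0 := hc.ne'
    have hμt : μ = 1 - ((m + M) / 2)⁻¹ * ((1 - μ) * ((m + M) / 2)) := by
      field_simp; ring
    have ht : (1 - μ) * ((m + M) / 2) ∈ spectrum ℝ a := by
      rw [← affine_mem (inv_ne_zero hcne) (a := a), ← hμt]; exact hμ
    obtain ⟨htm, htM⟩ := hspec ht
    have e : 1 - ((m + M) / 2)⁻¹ * ((1 - μ) * ((m + M) / 2))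
        = (m + M - 2 * ((1 - μ) * ((m + M) / 2))) / (m + M) := by
      field_simp
    rw [hμt, e, abs_div, abs_of_pos (show (0:ℝ) < m + M by linarith),
      div_le_div_iff₀ (by linarith) (show (0:ℝ) < M + m by linarith)]
    have habs : |m + M - 2 * ((1 - μ) * ((m + M) / 2))| ≤ M - m := by
      rw [abs_le]; constructor <;> linarith
    nlinarith [abs_nonneg (m + M - 2 * ((1 - μ) * ((m + M) / 2)))]

lemma nonneg_of_spec {a : H →L[ℂ] H} (ha : IsSelfAdjoint a)
    (h : ∀ μ ∈ spectrum ℝ a, 0 ≤ μ) : 0 ≤ a :=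
  (StarOrderedRing.nonneg_iff_spectrum_nonneg (R := ℝ) a ha).mpr h

lemma smul_one_selfadj (r : ℝ) : IsSelfAdjoint (r • (1 : H →L[ℂ] H)) := by
  rw [IsSelfAdjoint, star_smul, star_trivial, star_one]

lemma smul_nonneg'' {r : ℝ} (hr : 0 ≤ r) {b : H →L[ℂ] H} (hb : 0 ≤ b) : 0 ≤ r • b := by
  have h := star_left_conjugate_nonneg hb (Real.sqrt r • (1 : H →L[ℂ] H))
  have e : star (Real.sqrt r • (1 : H →L[ℂ] H)) * b * (Real.sqrt r • 1) = r • b := by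
    rw [star_smul, star_trivial, star_one]
    rw [smul_mul_assoc, one_mul, mul_smul_comm, mul_one, smul_smul, Real.mul_self_sqrt hr]
  rwa [e] at h

lemma smul_le_smul'' {r : ℝ} (hr : 0 ≤ r) {a b : H →L[ℂ] H} (h : a ≤ b) :
    r • a ≤ r • b := by
  rw [← sub_nonneg, ← smul_sub]; exact smul_nonneg'' hr (sub_nonneg.mpr h)

lemma smul_one_le_of_spec {a : H →L[ℂ] H} (ha : IsSelfAdjoint a) {r : ℝ}
    (h : ∀ μ ∈ spectrum ℝ a, r ≤ μ) : r • (1 : H →L[ℂ] H) ≤ a := by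
  rw [← sub_nonneg]
  refine nonneg_of_spec (ha.sub (smul_one_selfadj r)) ?_
  have e := spectrum.sub_singleton_eq a r
  rw [Algebra.algebraMap_eq_smul_one] at e
  rw [← e]
  rintro μ hμ
  rw [Set.mem_sub] at hμ
  obtain ⟨u, hu, v, hv, rfl⟩ := hμ
  rw [Set.mem_singleton_iff] at hv
  subst hv
  linarith [h u hu]

lemma le_smul_one_of_spec {a : H →L[ℂ] H} (ha : IsSelfAdjoint a) {r : ℝ}
    (h : ∀ μ ∈ spectrum ℝ a, μ ≤ r) : a ≤ r • (1 : H →L[ℂ] H) := by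
  rw [← sub_nonneg]
  refine nonneg_of_spec ((smul_one_selfadj r).sub ha) ?_
  have e := spectrum.singleton_sub_eq a r
  rw [Algebra.algebraMap_eq_smul_one] at e
  rw [← e]
  rintro μ hμ
  rw [Set.mem_sub] at hμ
  obtain ⟨u, hu, v, hv, rfl⟩ := hμ
  rw [Set.mem_singleton_iff] at hu
  subst hu
  linarith [h v hv]

lemma spec_le_of_le {a : H →L[ℂ] H} {r : ℝ} (h : a ≤ r • (1 : H →L[ℂ] H))
    {μ : ℝ} (hμ : μ ∈ spectrum ℝ a) : μ ≤ r := by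
  have h0 : 0 ≤ r • (1 : H →L[ℂ] H) - a := sub_nonneg.mpr h
  have e := spectrum.singleton_sub_eq a r
  rw [Algebra.algebraMap_eq_smul_one] at e
  have hmem : r - μ ∈ spectrum ℝ (r • (1 : H →L[ℂ] H) - a) := by
    rw [← e]; exact Set.sub_mem_sub rfl hμ
  linarith [spectrum_nonneg_of_nonneg h0 hmem]

lemma le_spec_of_le {a : H →L[ℂ] H} {r : ℝ} (h : r • (1 : H →L[ℂ] H) ≤ a)
    {μ : ℝ} (hμ : μ ∈ spectrum ℝ a) : r ≤ μ := by
  have h0 : 0 ≤ a - r • (1 : H →L[ℂ] H) := sub_nonneg.mpr h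
  have e := spectrum.sub_singleton_eq a r
  rw [Algebra.algebraMap_eq_smul_one] at e
  have hmem : μ - r ∈ spectrum ℝ (a - r • (1 : H →L[ℂ] H)) := by
    rw [← e]; exact Set.sub_mem_sub hμ rfl
  linarith [spectrum_nonneg_of_nonneg h0 hmem]

lemma exists_sqrt {x : H →L[ℂ] H} (hx : 0 ≤ x) : ∃ s : H →L[ℂ] H, 0 ≤ s ∧ s * s = x := by
  have hsa : IsSelfAdjoint x := IsSelfAdjoint.of_nonneg hx
  refine ⟨cfc Real.sqrt x, cfc_nonneg (fun t _ => Real.sqrt_nonneg t), ?_⟩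
  rw [← cfc_mul Real.sqrt Real.sqrt x]
  rw [cfc_congr (g := fun t : ℝ => t)
    (fun t ht => Real.mul_self_sqrt (spectrum_nonneg_of_nonneg hx ht))]
  exact cfc_id' ℝ x hsa

lemma unit_of_unit_sq {s x : H →L[ℂ] H} (hss : s * s = x) (hux : IsUnit x) : IsUnit s :=
  (((Commute.refl s).isUnit_mul_iff).mp (hss ▸ hux)).1

lemma zero_not_mem_spec {a : H →L[ℂ] H} (ha : IsUnit a) : (0:ℝ) ∉ spectrum ℝ a :=
  fun h => (spectrum.zero_mem_iff ℝ).mp h ha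

lemma spec_mul_eq_conj {x y s : H →L[ℂ] H} (hss : s * s = x) (hus : IsUnit s)
    (huy : IsUnit y) : spectrum ℝ (x * y) = spectrum ℝ (s * y * s) := by
  have h1 : spectrum ℝ (x * y) \ {0} = spectrum ℝ (s * y * s) \ {0} := by
    rw [← hss, mul_assoc]
    exact spectrum.nonzero_mul_comm s (s * y)
  have hu1 : IsUnit (x * y) := ((hss ▸ (hus.mul hus)).mul huy)
  have hu2 : IsUnit (s * y * s) := (hus.mul huy).mul hus
  have e1 : spectrum ℝ (x * y) \ {0} = spectrum ℝ (x * y) :=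
    Set.diff_singleton_eq_self (zero_not_mem_spec hu1)
  have e2 : spectrum ℝ (s * y * s) \ {0} = spectrum ℝ (s * y * s) :=
    Set.diff_singleton_eq_self (zero_not_mem_spec hu2)
  rw [← e1, ← e2, h1]

lemma spec_mul_subset_nonneg {x y : H →L[ℂ] H} (hx : 0 ≤ x) (hy : 0 ≤ y) :
    spectrum ℝ (x * y) ⊆ Set.Ici 0 := by
  obtain ⟨s, hs0, hss⟩ := exists_sqrt hx
  have hs : IsSelfAdjoint s := IsSelfAdjoint.of_nonneg hs0
  have hconj : 0 ≤ s * y * s := by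
    have := star_left_conjugate_nonneg hy s
    rwa [hs.star_eq] at this
  intro μ hμ
  rcases eq_or_ne μ 0 with rfl | hne
  · exact Set.self_mem_Ici
  · have h1 : μ ∈ spectrum ℝ (x * y) \ {0} := ⟨hμ, hne⟩
    rw [← hss, mul_assoc] at h1
    rw [spectrum.nonzero_mul_comm s (s * y)] at h1
    have : (s * y) * s = s * y * s := rfl
    exact spectrum_nonneg_of_nonneg hconj h1.1

instance nontrivial_clm [Nontrivial H] : Nontrivial (H →L[ℂ] H) :=
  ⟨1, 0, fun h => by
    obtain ⟨v, hv⟩ := exists_ne (0 : H)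
    exact hv (by simpa using ContinuousLinearMap.ext_iff.mp h v)⟩

lemma spec_data [Nontrivial H] {x : H →L[ℂ] H} (hx : x.IsPositive) (hux : IsUnit x) :
    0 < sInf (spectrum ℝ x) ∧ sInf (spectrum ℝ x) ≤ sSup (spectrum ℝ x) ∧
    sInf (spectrum ℝ x) ∈ spectrum ℝ x ∧ sSup (spectrum ℝ x) ∈ spectrum ℝ x ∧
    spectrum ℝ x ⊆ Set.Icc (sInf (spectrum ℝ x)) (sSup (spectrum ℝ x)) ∧
    Delta x = (sSup (spectrum ℝ x) - sInf (spectrum ℝ x)) /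
      (sSup (spectrum ℝ x) + sInf (spectrum ℝ x)) := by
  have hsa : IsSelfAdjoint x := hx.isSelfAdjoint
  have hx0 : 0 ≤ x := (ContinuousLinearMap.nonneg_iff_isPositive x).mpr hx
  have hne : (spectrum ℝ x).Nonempty := hsa.spectrum_nonempty
  have hcpt : IsCompact (spectrum ℝ x) := spectrum.isCompact x
  have hmmem : sInf (spectrum ℝ x) ∈ spectrum ℝ x := hcpt.sInf_mem hne
  have hMmem : sSup (spectrum ℝ x) ∈ spectrum ℝ x := hcpt.sSup_mem hne
  have hsub : spectrum ℝ x ⊆ Set.Icc (sInf (spectrum ℝ x)) (sSup (spectrum ℝ x)) :=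
    fun μ hμ => ⟨csInf_le hcpt.bddBelow hμ, le_csSup hcpt.bddAbove hμ⟩
  have hm0 : 0 < sInf (spectrum ℝ x) := by
    rcases eq_or_lt_of_le (spectrum_nonneg_of_nonneg hx0 hmmem) with h | h
    · exact absurd (h ▸ hmmem) (zero_not_mem_spec hux)
    · exact h
  have hmM : sInf (spectrum ℝ x) ≤ sSup (spectrum ℝ x) := csInf_le_csSup hne hcpt.bddBelow hcpt.bddAbove
  refine ⟨hm0, hmM, hmmem, hMmem, hsub, le_antisymm ?_ ?_⟩
  · exact delta_le_of_spec hsa hm0 hmM hsub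
  · exact le_delta hm0.le hmM hmmem hMmem

lemma part1 [Nontrivial H] {x y : H →L[ℂ] H} (hx : x.IsPositive) (hy : y.IsPositive)
    (hux : IsUnit x) (huy : IsUnit y) (hΔ : Delta x ≤ Delta y) :
    DeltaS (x * y) ≤ Delta (y ^ 2) := by
  obtain ⟨hmx0, hmMx, hmxMem, hMxMem, hsubx, hDx⟩ := spec_data hx hux
  obtain ⟨hmy0, hmMy, hmyMem, hMyMem, hsuby, hDy⟩ := spec_data hy huy
  set mx := sInf (spectrum ℝ x); set Mx := sSup (spectrum ℝ x)
  set my := sInf (spectrum ℝ y); set My := sSup (spectrum ℝ y)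
  have hMx0 : 0 < Mx := lt_of_lt_of_le hmx0 hmMx
  have hMy0 : 0 < My := lt_of_lt_of_le hmy0 hmMy
  have hx0 : 0 ≤ x := (ContinuousLinearMap.nonneg_iff_isPositive x).mpr hx
  have hysa : IsSelfAdjoint y := hy.isSelfAdjoint
  obtain ⟨s, hs0, hss⟩ := exists_sqrt hx0
  have hs : IsSelfAdjoint s := IsSelfAdjoint.of_nonneg hs0
  have hus : IsUnit s := unit_of_unit_sq hss hux
  have hspec_eq : spectrum ℝ (x * y) = spectrum ℝ (s * y * s) :=
    spec_mul_eq_conj hss hus huy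
  have hzsa : IsSelfAdjoint (s * y * s) := by
    rw [IsSelfAdjoint]
    simp only [star_mul, hs.star_eq, hysa.star_eq]
    rw [mul_assoc]
  -- conjugation identity
  have hconj_id : ∀ r : ℝ, s * (r • (1 : H →L[ℂ] H)) * s = r • x := by
    intro r
    rw [mul_smul_comm, mul_one, smul_mul_assoc, hss]
  have k1 : my • (1 : H →L[ℂ] H) ≤ y := smul_one_le_of_spec hysa fun μ hμ => (hsuby hμ).1
  have k1' : y ≤ My • (1 : H →L[ℂ] H) := le_smul_one_of_spec hysa fun μ hμ => (hsuby hμ).2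
  have k2 : mx • (1 : H →L[ℂ] H) ≤ x := smul_one_le_of_spec hx.isSelfAdjoint fun μ hμ => (hsubx hμ).1
  have k2' : x ≤ Mx • (1 : H →L[ℂ] H) := le_smul_one_of_spec hx.isSelfAdjoint fun μ hμ => (hsubx hμ).2
  have hz_lo : (mx * my) • (1 : H →L[ℂ] H) ≤ s * y * s := by
    calc (mx * my) • (1 : H →L[ℂ] H) = my • (mx • (1 : H →L[ℂ] H)) := by
          rw [smul_smul, mul_comm]
      _ ≤ my • x := smul_le_smul'' hmy0.le k2
      _ = s * (my • (1 : H →L[ℂ] H)) * s := (hconj_id my).symm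
      _ ≤ s * y * s := by
          have := star_left_conjugate_le_conjugate k1 s
          rwa [hs.star_eq] at this
  have hz_hi : s * y * s ≤ (Mx * My) • (1 : H →L[ℂ] H) := by
    calc s * y * s ≤ s * (My • (1 : H →L[ℂ] H)) * s := by
          have := star_left_conjugate_le_conjugate k1' s
          rwa [hs.star_eq] at this
      _ = My • x := hconj_id My
      _ ≤ My • (Mx • (1 : H →L[ℂ] H)) := smul_le_smul'' hMy0.le k2'
      _ = (Mx * My) • (1 : H →L[ℂ] H) := by rw [smul_smul, mul_comm]
  have hsubz : spectrum ℝ (x * y) ⊆ Set.Icc (mx * my) (Mx * My) := by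
    rw [hspec_eq]
    exact fun μ hμ => ⟨le_spec_of_le hz_lo hμ, spec_le_of_le hz_hi hμ⟩
  have hnez : (spectrum ℝ (x * y)).Nonempty := by
    rw [hspec_eq]; exact hzsa.spectrum_nonempty
  have hcptz : IsCompact (spectrum ℝ (x * y)) := spectrum.isCompact _
  set s0 := sInf (spectrum ℝ (x * y))
  set S := sSup (spectrum ℝ (x * y))
  have hs0mem : s0 ∈ spectrum ℝ (x * y) := hcptz.sInf_mem hnez
  have hSmem : S ∈ spectrum ℝ (x * y) := hcptz.sSup_mem hnez
  obtain ⟨hps0, hs0P⟩ := hsubz hs0mem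
  obtain ⟨hpS, hSP⟩ := hsubz hSmem
  have hs0S : s0 ≤ S := csInf_le hcptz.bddBelow hSmem
  have hp0 : 0 < mx * my := mul_pos hmx0 hmy0
  have hP0 : 0 < Mx * My := mul_pos hMx0 hMy0
  have hDS : DeltaS (x * y) = (S - s0) / (S + s0) := rfl
  rw [hDS]
  have h_a : (S - s0) / (S + s0) ≤ (Mx * My - mx * my) / (Mx * My + mx * my) := by
    rw [div_le_div_iff₀ (by linarith) (by linarith)]
    nlinarith [mul_le_mul_of_nonneg_right hSP hp0.le,
      mul_le_mul_of_nonneg_left hps0 hP0.le]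
  have h_key : Mx * my ≤ My * mx := by
    have hΔ' : (Mx - mx) / (Mx + mx) ≤ (My - my) / (My + my) := by
      rw [hDx, hDy] at hΔ; exact hΔ
    rw [div_le_div_iff₀ (by linarith) (by linarith)] at hΔ'
    nlinarith [hΔ']
  have h_b : (Mx * My - mx * my) / (Mx * My + mx * my)
      ≤ (My ^ 2 - my ^ 2) / (My ^ 2 + my ^ 2) := by
    rw [div_le_div_iff₀ (by linarith) (by positivity)]
    nlinarith [mul_le_mul_of_nonneg_left h_key (mul_pos hMy0 hmy0).le]
  have hspecy2 : spectrum ℝ (y ^ 2) = (fun t : ℝ => t ^ 2) '' spectrum ℝ y := by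
    rw [← cfc_pow_id (R := ℝ) y 2 hysa, cfc_map_spectrum (f := fun t : ℝ => t ^ 2) (a := y) hysa (by fun_prop)]
  have h_c : (My ^ 2 - my ^ 2) / (My ^ 2 + my ^ 2) ≤ Delta (y ^ 2) := by
    refine le_delta (sq_nonneg my) (by nlinarith) ?_ ?_
    · rw [hspecy2]; exact ⟨my, hmyMem, rfl⟩
    · rw [hspecy2]; exact ⟨My, hMyMem, rfl⟩
  linarith

lemma deltaS_le_one {x y : H →L[ℂ] H} (hx0 : 0 ≤ x) (hy0 : 0 ≤ y) :
    DeltaS (x * y) ≤ 1 := by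
  rcases (spectrum ℝ (x * y)).eq_empty_or_nonempty with he | hne
  · unfold DeltaS; rw [he]; simp [Real.sSup_empty, Real.sInf_empty]
  · have hcpt : IsCompact (spectrum ℝ (x * y)) := spectrum.isCompact _
    have hsub := spec_mul_subset_nonneg hx0 hy0
    have hs0 : 0 ≤ sInf (spectrum ℝ (x * y)) := le_csInf hne fun b hb => hsub hb
    have hs0S : sInf (spectrum ℝ (x * y)) ≤ sSup (spectrum ℝ (x * y)) :=
      csInf_le_csSup hne hcpt.bddBelow hcpt.bddAbove
    unfold DeltaS
    rcases eq_or_lt_of_le (by linarith :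
        (0:ℝ) ≤ sSup (spectrum ℝ (x * y)) + sInf (spectrum ℝ (x * y))) with h | h
    · rw [← h, div_zero]; norm_num
    · rw [div_le_one h]; linarith

lemma one_le_delta_sq_of_not_unit [Nontrivial H] {x : H →L[ℂ] H} (hux : ¬IsUnit x) :
    1 ≤ Delta (x ^ 2) := by
  have hsq : ¬IsUnit (x ^ 2) := by
    intro h
    rw [pow_two] at h
    exact hux (((Commute.refl x).isUnit_mul_iff.mp h).1)
  have h0 : (0 : ℝ) ∈ spectrum ℝ (x ^ 2) := (spectrum.zero_mem_iff ℝ).mpr hsq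
  refine le_ciInf fun A => ?_
  obtain ⟨A, hA⟩ := A
  have h := spectrum.norm_le_norm_of_mem ((affine_mem (inv_ne_zero hA.ne')).mpr h0)
  simpa using h

lemma deltaS_comm {x y : H →L[ℂ] H} (hux : IsUnit x) (huy : IsUnit y) :
    DeltaS (x * y) = DeltaS (y * x) := by
  have h1 := spectrum.nonzero_mul_comm (𝕜 := ℝ) x y
  have e1 : spectrum ℝ (x * y) \ {0} = spectrum ℝ (x * y) :=
    Set.diff_singleton_eq_self (zero_not_mem_spec (hux.mul huy))
  have e2 : spectrum ℝ (y * x) \ {0} = spectrum ℝ (y * x) :=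
    Set.diff_singleton_eq_self (zero_not_mem_spec (huy.mul hux))
  have : spectrum ℝ (x * y) = spectrum ℝ (y * x) := by rw [← e1, ← e2, h1]
  unfold DeltaS; rw [this]

instance subsingleton_clm [Subsingleton H] : Subsingleton (H →L[ℂ] H) :=
  ⟨fun f g => by ext v; exact Subsingleton.elim _ _⟩

theorem delta_mul_le :
    (∀ x y : H →L[ℂ] H, x.IsPositive → y.IsPositive → IsUnit x → IsUnit y →
      Delta x ≤ Delta y → DeltaS (x * y) ≤ Delta (y ^ 2)) ∧
    (∀ x y : H →L[ℂ] H, x.IsPositive → y.IsPositive →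
      DeltaS (x * y) ≤ max (Delta (x ^ 2)) (Delta (y ^ 2))) := by
  constructor
  · intro x y hx hy hux huy hΔ
    rcases subsingleton_or_nontrivial H with hH | hH
    · unfold DeltaS
      rw [spectrum.of_subsingleton, Real.sSup_empty, Real.sInf_empty]
      simpa using delta_nonneg (y ^ 2)
    · exact part1 hx hy hux huy hΔ
  · intro x y hx hy
    rcases subsingleton_or_nontrivial H with hH | hH
    · unfold DeltaS
      rw [spectrum.of_subsingleton, Real.sSup_empty, Real.sInf_empty]
      simpa using le_max_of_le_left (delta_nonneg (x ^ 2))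
    · have hx0 : 0 ≤ x := (ContinuousLinearMap.nonneg_iff_isPositive x).mpr hx
      have hy0 : 0 ≤ y := (ContinuousLinearMap.nonneg_iff_isPositive y).mpr hy
      by_cases hux : IsUnit x
      · by_cases huy : IsUnit y
        · rcases le_total (Delta x) (Delta y) with h | h
          · exact le_trans (part1 hx hy hux huy h) (le_max_right _ _)
          · calc DeltaS (x * y) = DeltaS (y * x) := deltaS_comm hux huy
              _ ≤ Delta (x ^ 2) := part1 hy hx huy hux h
              _ ≤ max (Delta (x ^ 2)) (Delta (y ^ 2)) := le_max_left _ _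
        · refine le_trans (deltaS_le_one hx0 hy0) (le_trans (one_le_delta_sq_of_not_unit huy)
            (le_max_right _ _))
      · refine le_trans (deltaS_le_one hx0 hy0) (le_trans (one_le_delta_sq_of_not_unit hux)
          (le_max_left _ _))
end
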